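/- arXiv:1801.05043 — 2 statements merged into one kernel-verified Lean document; each statement's English description precedes it below -/
import Mathlib

section
/- Upper bound on the expected conductance (Lemma 3.1): if E[ξ^{-1}] < ∞, then for all n ≥ 1, E[C_n] ≤ E[ξ^{-1}]/n. -/
open MeasureTheory ProbabilityTheory Filter Topology Asymptotics
open scoped ENNReal

noncomputable section

/-- The root of the Galton--Watson tree, seen as the empty word. -/
def root : List ℕ := []

/-- `tcount ν n x ω` is the number of descendants at relative depth `n` of the vertex `x`
in the Galton--Watson tree built from the offspring variables `ν`; thus `#T_n[x] = tcount ν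
(n - |x|) x` and `#T_n = tcount ν n root`. -/
def tcount {Ω : Type*} (ν : List ℕ → Ω → ℕ) : ℕ → List ℕ → Ω → ℕ
  | 0, _, _ => 1
  | n + 1, x, ω => ∑ i ∈ Finset.range (ν x ω), tcount ν n (x ++ [i]) ω

/-- `verts ν n ω` is the set `T_n` of vertices (words) at depth `n` of the Galton--Watson
tree. -/
def verts {Ω : Type*} (ν : List ℕ → Ω → ℕ) : ℕ → Ω → Finset (List ℕ)
  | 0, _ => {root}
  | n + 1, ω => (verts ν n ω).biUnion fun x => (Finset.range (ν x ω)).image fun i => x ++ [i]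

/-- `gwCond m ν ξ n x ω` is the rescaled effective conductance between the vertex `x` and its
descendants at relative depth `n`, defined through the series--parallel recursion
`C_1(x) = m⁻¹ ∑_{i<ν_x} ξ_{xi}⁻¹` and
`C_{n+1}(x) = m⁻¹ ∑_{i<ν_x} C_n(xi) / (1 + ξ_{xi} C_n(xi))`.
In particular `C_n = gwCond m ν ξ n root` and `R_n = (gwCond m ν ξ n root)⁻¹`. -/
def gwCond {Ω : Type*} (m : ℝ) (ν : List ℕ → Ω → ℕ) (ξ : List ℕ → Ω → ℝ) :
    ℕ → List ℕ → Ω → ℝ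
  | 0, _, _ => 0
  | 1, x, ω => m⁻¹ * ∑ i ∈ Finset.range (ν x ω), (ξ (x ++ [i]) ω)⁻¹
  | n + 2, x, ω => m⁻¹ * ∑ i ∈ Finset.range (ν x ω),
      gwCond m ν ξ (n + 1) (x ++ [i]) ω /
        (1 + ξ (x ++ [i]) ω * gwCond m ν ξ (n + 1) (x ++ [i]) ω)

/-- Codomain of the joint family gathering the offspring variables `ν_x` (indexed by
`Sum.inl x`) and the edge weights `ξ_x` (indexed by `Sum.inr x`). -/
def codom : List ℕ ⊕ List ℕ → Type
  | .inl _ => ℕ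
  | .inr _ => ℝ

instance : ∀ i, MeasurableSpace (codom i)
  | .inl _ => inferInstanceAs (MeasurableSpace ℕ)
  | .inr _ => inferInstanceAs (MeasurableSpace ℝ)

/-- The joint family of the offspring variables and the edge weights, used to state that all
these random variables are globally independent. -/
def pairFam {Ω : Type*} (ν : List ℕ → Ω → ℕ) (ξ : List ℕ → Ω → ℝ) :
    (i : List ℕ ⊕ List ℕ) → Ω → codom i
  | .inl x => ν x
  | .inr x => ξ x


namespace GWAux

open MeasureTheory ProbabilityTheory
open scoped ENNReal

variable {Ω : Type*} [MeasurableSpace Ω]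

lemma measurable_nat_elim {α : Type*} [MeasurableSpace α] {g : ℕ → Ω → α}
    (hg : ∀ k, Measurable (g k)) {f : Ω → ℕ} (hf : Measurable f) :
    Measurable fun ω => g (f ω) ω := by
  have h : Measurable fun p : Ω × ℕ => g p.2 p.1 :=
    measurable_from_prod_countable_left fun k => hg k
  exact h.comp (measurable_id.prodMk hf)

lemma gwCond_measurable (m : ℝ) (ν : List ℕ → Ω → ℕ) (ξ : List ℕ → Ω → ℝ)
    (hmν : ∀ x, Measurable (ν x)) (hmξ : ∀ x, Measurable (ξ x)) :
    ∀ n x, Measurable (gwCond m ν ξ n x) := by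
  intro n
  induction n using Nat.strong_induction_on with
  | _ n ih =>
    match n with
    | 0 => intro x; exact measurable_const
    | 1 =>
      intro x
      have h : ∀ k : ℕ, Measurable fun ω => m⁻¹ * ∑ i ∈ Finset.range k, (ξ (x ++ [i]) ω)⁻¹ :=
        fun k => (Finset.measurable_sum _ fun i _ => (hmξ _).inv).const_mul _
      exact measurable_nat_elim h (hmν x)
    | (k+2) =>
      intro x
      have hC : ∀ i : ℕ, Measurable fun ω =>
          gwCond m ν ξ (k+1) (x ++ [i]) ω /
            (1 + ξ (x ++ [i]) ω * gwCond m ν ξ (k+1) (x ++ [i]) ω) :=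
        fun i => (ih (k+1) (by omega) _).div
          (measurable_const.add ((hmξ _).mul (ih (k+1) (by omega) _)))
      have h : ∀ kk : ℕ, Measurable fun ω => m⁻¹ * ∑ i ∈ Finset.range kk,
          gwCond m ν ξ (k+1) (x ++ [i]) ω /
            (1 + ξ (x ++ [i]) ω * gwCond m ν ξ (k+1) (x ++ [i]) ω) :=
        fun kk => (Finset.measurable_sum _ fun i _ => hC i).const_mul _
      exact measurable_nat_elim h (hmν x)

omit [MeasurableSpace Ω] in
lemma gwCond_nonneg {m : ℝ} (hm : 0 < m) (ν : List ℕ → Ω → ℕ) (ξ : List ℕ → Ω → ℝ) {ω : Ω}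
    (hξ : ∀ x, 0 < ξ x ω) : ∀ n x, 0 ≤ gwCond m ν ξ n x ω := by
  intro n
  induction n using Nat.strong_induction_on with
  | _ n ih =>
    match n with
    | 0 => intro x; exact le_refl 0
    | 1 =>
      intro x
      exact mul_nonneg (inv_nonneg.mpr hm.le)
        (Finset.sum_nonneg fun i _ => inv_nonneg.mpr (hξ _).le)
    | (k+2) =>
      intro x
      refine mul_nonneg (inv_nonneg.mpr hm.le) (Finset.sum_nonneg fun i _ => div_nonneg
        (ih (k+1) (by omega) _)
        (add_nonneg zero_le_one (mul_nonneg (hξ _).le (ih (k+1) (by omega) _))))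

omit [MeasurableSpace Ω] in
lemma gwCond_append (m : ℝ) (ν : List ℕ → Ω → ℕ) (ξ : List ℕ → Ω → ℝ) (x : List ℕ) :
    ∀ n y ω, gwCond m ν ξ n (x ++ y) ω
      = gwCond m (fun z => ν (x ++ z)) (fun z => ξ (x ++ z)) n y ω := by
  intro n
  induction n using Nat.strong_induction_on with
  | _ n ih =>
    match n with
    | 0 => intro y ω; rfl
    | 1 => intro y ω; simp only [gwCond, List.append_assoc]
    | (k+2) =>
      intro y ω
      simp only [gwCond]
      congr 1
      refine Finset.sum_congr rfl fun i _ => ?_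
      rw [List.append_assoc, ih (k+1) (by omega) (y ++ [i]) ω]

omit [MeasurableSpace Ω] in
lemma gwCond_comp {Ω' : Type*} (m : ℝ) (ν' : List ℕ → Ω' → ℕ) (ξ' : List ℕ → Ω' → ℝ)
    (h : Ω → Ω') :
    ∀ n y ω, gwCond m ν' ξ' n y (h ω)
      = gwCond m (fun z ω => ν' z (h ω)) (fun z ω => ξ' z (h ω)) n y ω := by
  intro n
  induction n using Nat.strong_induction_on with
  | _ n ih =>
    match n with
    | 0 => intro y ω; rfl
    | 1 => intro y ω; rfl
    | (k+2) =>
      intro y ω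
      simp only [gwCond]
      congr 1
      refine Finset.sum_congr rfl fun i _ => ?_
      rw [ih (k+1) (by omega) (y ++ [i]) ω]

lemma real_key {c t N : ℝ} (hc : 0 ≤ c) (ht : 0 < t) (hN : 0 < N) :
    c / (1 + t * c) ≤ (N / (N+1))^2 * c + (1 / (N+1))^2 * t⁻¹ := by
  have h1 : 0 < 1 + t * c := by positivity
  have h2 : 0 < (N+1)^2 := by positivity
  have hN1 : 0 < N + 1 := by positivity
  rw [div_le_iff₀ h1]
  have h3 : 0 ≤ (N * t * c - 1)^2 := sq_nonneg _
  have h4 : t * t⁻¹ = 1 := mul_inv_cancel₀ ht.ne'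
  have h5 : 0 ≤ t⁻¹ := inv_nonneg.mpr ht.le
  have expand : ((N / (N + 1)) ^ 2 * c + (1 / (N + 1)) ^ 2 * t⁻¹) * (1 + t * c)
      = (N^2 * c + N^2 * t * c^2 + t⁻¹ + c) / (N+1)^2 := by
    field_simp
    ring
  rw [expand, le_div_iff₀ h2]
  nlinarith [mul_nonneg (mul_nonneg h5 h3) ht.le, sq_nonneg (N * t * c - 1),
    mul_nonneg hc ht.le]

def shiftFam (ν : List ℕ → Ω → ℕ) (ξ : List ℕ → Ω → ℝ) (x : List ℕ) :
    (i : List ℕ ⊕ List ℕ) → Ω → codom i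
  | .inl y => ν (x ++ y)
  | .inr y => ξ (x ++ y)

def jointFam (ν : List ℕ → Ω → ℕ) (ξ : List ℕ → Ω → ℝ) (x : List ℕ) (ω : Ω)
    (i : List ℕ ⊕ List ℕ) : codom i := shiftFam ν ξ x i ω

variable (ν : List ℕ → Ω → ℕ) (ξ : List ℕ → Ω → ℝ)

lemma shiftFam_measurable (hmν : ∀ x, Measurable (ν x)) (hmξ : ∀ x, Measurable (ξ x))
    (x : List ℕ) (i : List ℕ ⊕ List ℕ) : Measurable (shiftFam ν ξ x i) := by
  cases i with
  | inl y => exact hmν _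
  | inr y => exact hmξ _

lemma jointFam_measurable (hmν : ∀ x, Measurable (ν x)) (hmξ : ∀ x, Measurable (ξ x))
    (x : List ℕ) : Measurable (jointFam ν ξ x) :=
  measurable_pi_iff.mpr fun i => shiftFam_measurable ν ξ hmν hmξ x i

variable {P : Measure Ω}

lemma shiftFam_iIndep (hindep : iIndepFun (pairFam ν ξ) P)
    (x : List ℕ) : iIndepFun (shiftFam ν ξ x) P := by
  classical
  rw [iIndepFun_iff_measure_inter_preimage_eq_mul]
  intro S sets hsets
  set f : List ℕ ⊕ List ℕ → List ℕ ⊕ List ℕ := Sum.map (x ++ ·) (x ++ ·) with hf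
  have hfinj : Function.Injective f := by
    intro a b hab
    cases a <;> cases b <;> simp_all [f]
  set sets' : ∀ j : List ℕ ⊕ List ℕ, Set (codom j) := fun j =>
    match j with
    | .inl y => if x <+: y then sets (.inl (y.drop x.length)) else Set.univ
    | .inr y => if x <+: y then sets (.inr (y.drop x.length)) else Set.univ
    with hsets'
  have hl : ∀ y : List ℕ, sets' (.inl (x ++ y)) = sets (.inl y) := fun y => by
    have h : (sets (Sum.inl ((x ++ y).drop x.length)) : Set ℕ) = sets (Sum.inl y) := by
      rw [List.drop_left]
    simp [sets', List.prefix_append]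
    exact h
  have hr : ∀ y : List ℕ, sets' (.inr (x ++ y)) = sets (.inr y) := fun y => by
    have h : (sets (Sum.inr ((x ++ y).drop x.length)) : Set ℝ) = sets (Sum.inr y) := by
      rw [List.drop_left]
    simp [sets', List.prefix_append]
    exact h
  have hset_eq : ∀ i : List ℕ ⊕ List ℕ,
      pairFam ν ξ (f i) ⁻¹' sets' (f i) = shiftFam ν ξ x i ⁻¹' sets i := by
    rintro (y | y)
    · show ν (x ++ y) ⁻¹' sets' (.inl (x ++ y)) = ν (x ++ y) ⁻¹' sets (.inl y)
      rw [hl]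
    · show ξ (x ++ y) ⁻¹' sets' (.inr (x ++ y)) = ξ (x ++ y) ⁻¹' sets (.inr y)
      rw [hr]
  have hmeas' : ∀ j ∈ S.image f, MeasurableSet (sets' j) := by
    intro j hj
    obtain ⟨i, hi, rfl⟩ := Finset.mem_image.mp hj
    cases i with
    | inl y => rw [show f (.inl y) = .inl (x ++ y) from rfl, hl]; exact hsets _ hi
    | inr y => rw [show f (.inr y) = .inr (x ++ y) from rfl, hr]; exact hsets _ hi
  have H := iIndepFun_iff_measure_inter_preimage_eq_mul.mp hindep (S.image f) hmeas'
  have h1 : (⋂ j ∈ S.image f, pairFam ν ξ j ⁻¹' sets' j)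
      = ⋂ i ∈ S, shiftFam ν ξ x i ⁻¹' sets i := by
    ext ω
    simp only [Set.mem_iInter, Finset.mem_image]
    constructor
    · intro h i hi
      have := h (f i) ⟨i, hi, rfl⟩
      rwa [hset_eq i] at this
    · rintro h j ⟨i, hi, rfl⟩
      rw [hset_eq i]
      exact h i hi
  have h2 : (∏ j ∈ S.image f, P (pairFam ν ξ j ⁻¹' sets' j))
      = ∏ i ∈ S, P (shiftFam ν ξ x i ⁻¹' sets i) := by
    rw [Finset.prod_image fun i _ j _ h => hfinj h]
    exact Finset.prod_congr rfl fun i _ => by rw [hset_eq i]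
  rw [h1, h2] at H
  exact H

lemma shiftFam_map (hidν : ∀ x, IdentDistrib (ν x) (ν ([])) P P)
    (hidξ : ∀ x, IdentDistrib (ξ x) (ξ ([])) P P) (x : List ℕ) (i : List ℕ ⊕ List ℕ) :
    Measure.map (shiftFam ν ξ x i) P = Measure.map (shiftFam ν ξ ([]) i) P := by
  cases i with
  | inl y => exact ((hidν (x ++ y)).trans (hidν ([] ++ y)).symm).map_eq
  | inr y => exact ((hidξ (x ++ y)).trans (hidξ ([] ++ y)).symm).map_eq

lemma restrict_jointFam_map [IsProbabilityMeasure P]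
    (hmν : ∀ x, Measurable (ν x)) (hmξ : ∀ x, Measurable (ξ x))
    (hindep : iIndepFun (pairFam ν ξ) P)
    (hidν : ∀ x, IdentDistrib (ν x) (ν ([])) P P)
    (hidξ : ∀ x, IdentDistrib (ξ x) (ξ ([])) P P)
    (x : List ℕ) (s : Finset (List ℕ ⊕ List ℕ)) :
    Measure.map (fun ω => s.restrict (jointFam ν ξ x ω)) P
      = Measure.map (fun ω => s.restrict (jointFam ν ξ ([]) ω)) P := by
  classical
  have hmeas : ∀ x', Measurable fun ω => s.restrict (jointFam ν ξ x' ω) := fun x' =>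
    measurable_pi_iff.mpr fun i => shiftFam_measurable ν ξ hmν hmξ x' i
  haveI h1 : IsProbabilityMeasure (Measure.map (fun ω => s.restrict (jointFam ν ξ x ω)) P) :=
    Measure.isProbabilityMeasure_map (hmeas x).aemeasurable
  haveI h2 : IsProbabilityMeasure (Measure.map (fun ω => s.restrict (jointFam ν ξ ([]) ω)) P) :=
    Measure.isProbabilityMeasure_map (hmeas ([])).aemeasurable
  refine ext_of_generate_finite _ generateFrom_pi.symm isPiSystem_pi ?_ (by simp)
  rintro _ ⟨A, hA, rfl⟩
  simp only [Set.mem_univ_pi, Set.mem_setOf_eq] at hA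
  have hA' : ∀ i : s, MeasurableSet (A i) := hA
  set B : ∀ j : List ℕ ⊕ List ℕ, Set (codom j) :=
    fun j => if h : j ∈ s then A ⟨j, h⟩ else Set.univ with hB
  have hBmeas : ∀ j ∈ s, MeasurableSet (B j) := by
    intro j hj
    simp only [B, dif_pos hj]
    exact hA' ⟨j, hj⟩
  have hbox : ∀ x', (fun ω => s.restrict (jointFam ν ξ x' ω)) ⁻¹' Set.univ.pi A
      = ⋂ j ∈ s, shiftFam ν ξ x' j ⁻¹' B j := by
    intro x'
    ext ω
    simp only [Set.mem_preimage, Set.mem_univ_pi, Set.mem_iInter]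
    constructor
    · intro h j hj
      have := h ⟨j, hj⟩
      simpa [B, dif_pos hj, Finset.restrict, jointFam] using this
    · intro h i
      have := h i.1 i.2
      simpa [B, dif_pos i.2, Finset.restrict, jointFam] using this
  rw [Measure.map_apply (hmeas x) (MeasurableSet.univ_pi hA'),
    Measure.map_apply (hmeas ([])) (MeasurableSet.univ_pi hA'), hbox x, hbox ([]),
    (shiftFam_iIndep ν ξ hindep x).measure_inter_preimage_eq_mul s hBmeas,
    (shiftFam_iIndep ν ξ hindep ([])).measure_inter_preimage_eq_mul s hBmeas]
  refine Finset.prod_congr rfl fun j hj => ?_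
  have hms : MeasurableSet (B j) := hBmeas j hj
  rw [← Measure.map_apply (shiftFam_measurable ν ξ hmν hmξ x j) hms,
    ← Measure.map_apply (shiftFam_measurable ν ξ hmν hmξ ([]) j) hms,
    shiftFam_map ν ξ hidν hidξ x j]

lemma jointFam_map [IsProbabilityMeasure P]
    (hmν : ∀ x, Measurable (ν x)) (hmξ : ∀ x, Measurable (ξ x))
    (hindep : iIndepFun (pairFam ν ξ) P)
    (hidν : ∀ x, IdentDistrib (ν x) (ν ([])) P P)
    (hidξ : ∀ x, IdentDistrib (ξ x) (ξ ([])) P P)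
    (x : List ℕ) :
    Measure.map (jointFam ν ξ x) P = Measure.map (jointFam ν ξ ([])) P := by
  have hmeas : ∀ x', Measurable (jointFam ν ξ x') := jointFam_measurable ν ξ hmν hmξ
  haveI h1 : IsProbabilityMeasure (Measure.map (jointFam ν ξ x) P) :=
    Measure.isProbabilityMeasure_map (hmeas x).aemeasurable
  haveI h2 : IsProbabilityMeasure (Measure.map (jointFam ν ξ ([])) P) :=
    Measure.isProbabilityMeasure_map (hmeas ([])).aemeasurable
  refine ext_of_generate_finite _ generateFrom_measurableCylinders.symm
    isPiSystem_measurableCylinders ?_ (by simp)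
  intro t ht
  obtain ⟨s, S, hS, rfl⟩ := (mem_measurableCylinders t).mp ht
  have hrmeas : ∀ x', Measurable fun ω => s.restrict (jointFam ν ξ x' ω) := fun x' =>
    measurable_pi_iff.mpr fun i => shiftFam_measurable ν ξ hmν hmξ x' i
  rw [Measure.map_apply (hmeas x) (hS.cylinder s), Measure.map_apply (hmeas ([])) (hS.cylinder s)]
  have hc : ∀ x', (jointFam ν ξ x') ⁻¹' cylinder s S
      = (fun ω => s.restrict (jointFam ν ξ x' ω)) ⁻¹' S := fun _ => rfl
  rw [hc x, hc ([]), ← Measure.map_apply (hrmeas x) hS, ← Measure.map_apply (hrmeas ([])) hS,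
    restrict_jointFam_map ν ξ hmν hmξ hindep hidν hidξ x s]

end GWAux

/-- Upper bound on the expected conductance: `E[C_n] ≤ E[ξ⁻¹]/n` for all `n ≥ 1`. -/
theorem expected_conductance_upper_bound
    {Ω : Type*} [MeasurableSpace Ω] (P : Measure Ω) [IsProbabilityMeasure P]
    -- the offspring variables `ν_x` and the edge weights `ξ_x`
    (ν : List ℕ → Ω → ℕ) (ξ : List ℕ → Ω → ℝ)
    (hmν : ∀ x, Measurable (ν x)) (hmξ : ∀ x, Measurable (ξ x))
    -- the two families are i.i.d. and globally independent
    (hindep : iIndepFun (pairFam ν ξ) P)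
    (hidν : ∀ x, IdentDistrib (ν x) (ν root) P P)
    (hidξ : ∀ x, IdentDistrib (ξ x) (ξ root) P P)
    -- `ν` takes values in the positive integers and `ξ` is strictly positive
    (hνpos : ∀ x, ∀ᵐ ω ∂P, 0 < ν x ω)
    (hξpos : ∀ x, ∀ᵐ ω ∂P, 0 < ξ x ω)
    -- the mean offspring number `m = E[ν]` satisfies `1 < m`
    (hνint : Integrable (fun ω => (ν root ω : ℝ)) P)
    (m : ℝ) (hm : m = ∫ ω, (ν root ω : ℝ) ∂P) (hm1 : 1 < m)
    (hξinv : Integrable (fun ω => (ξ root ω)⁻¹) P)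
    :
    ∀ n : ℕ, 1 ≤ n →
      ∫ ω, gwCond m ν ξ n root ω ∂P ≤ (∫ ω, (ξ root ω)⁻¹ ∂P) / n := by
  classical
  open GWAux in
  have hm0 : 0 < m := lt_trans one_pos hm1
  -- coordinate random variables on the canonical product space
  set νc : List ℕ → (∀ j, codom j) → ℕ := fun z f => f (Sum.inl z) with hνc
  set ξc : List ℕ → (∀ j, codom j) → ℝ := fun z f => f (Sum.inr z) with hξc
  set ev : (∀ j, codom j) → ℝ := fun f => f (Sum.inr ([])) with hevdef
  have hevm : Measurable ev := measurable_pi_apply _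
  have hνcm : ∀ z, Measurable (νc z) := fun z => measurable_pi_apply _
  have hξcm : ∀ z, Measurable (ξc z) := fun z => measurable_pi_apply _
  have hGmeas : ∀ n y, Measurable (gwCond m νc ξc n y) :=
    GWAux.gwCond_measurable m νc ξc hνcm hξcm
  have hgwmeas : ∀ n x, Measurable (gwCond m ν ξ n x) :=
    GWAux.gwCond_measurable m ν ξ hmν hmξ
  -- connection between `gwCond` on `Ω` and on the product space
  have hconn : ∀ (n : ℕ) (x : List ℕ) (ω : Ω),
      gwCond m νc ξc n ([]) (GWAux.jointFam ν ξ x ω) = gwCond m ν ξ n x ω := by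
    intro n x ω
    have h1 := GWAux.gwCond_comp m νc ξc (GWAux.jointFam ν ξ x) n ([]) ω
    have h2 := GWAux.gwCond_append m ν ξ x n ([]) ω
    rw [List.append_nil] at h2
    exact h1.trans h2.symm
  -- the a.e. positivity event
  have hE : ∀ᵐ ω ∂P, ∀ x : List ℕ, 0 < ξ x ω := ae_all_iff.mpr hξpos
  have hgw0 : ∀ n x, ∀ᵐ ω ∂P, 0 ≤ gwCond m ν ξ n x ω := fun n x =>
    hE.mono fun ω hω => GWAux.gwCond_nonneg hm0 ν ξ hω n x
  -- the quantity `Al = ∫⁻ ofReal (ξ∅⁻¹)`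
  set Al : ℝ≥0∞ := ∫⁻ ω, ENNReal.ofReal ((ξ ([]) ω)⁻¹) ∂P with hAldef
  have hξinv0 : 0 ≤ᵐ[P] fun ω => (ξ root ω)⁻¹ :=
    (hξpos root).mono fun ω h => inv_nonneg.mpr h.le
  have hAlof : ENNReal.ofReal (∫ ω, (ξ root ω)⁻¹ ∂P) = Al :=
    ofReal_integral_eq_lintegral_ofReal hξinv hξinv0
  have hAltop : Al ≠ ⊤ := by rw [← hAlof]; exact ENNReal.ofReal_ne_top
  -- the indicator variables of `{i < ν∅}`
  set χ : ℕ → Ω → ℝ≥0∞ := fun i ω => if i < ν ([]) ω then 1 else 0 with hχdef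
  have hνset : ∀ i : ℕ, MeasurableSet {ω | i < ν ([]) ω} := fun i =>
    hmν ([]) MeasurableSpace.measurableSet_top
  have hχmeas : ∀ i, Measurable (χ i) := fun i =>
    Measurable.ite (hνset i) measurable_const measurable_const
  have hχint : ∀ i, ∫⁻ ω, χ i ω ∂P = P {ω | i < ν ([]) ω} := by
    intro i
    rw [show χ i = Set.indicator {ω | i < ν ([]) ω} (fun _ => 1) from funext fun ω => by
      simp [χ, Set.indicator_apply, Set.mem_setOf_eq]]
    exact lintegral_indicator_one (hνset i)
  -- `∑ P(i < ν∅) = ofReal m`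
  have hsum : (∑' i : ℕ, P {ω | i < ν ([]) ω}) = ENNReal.ofReal m := by
    have h1 : ∀ ω, (∑' i : ℕ, χ i ω) = ((ν ([]) ω : ℕ) : ℝ≥0∞) := by
      intro ω
      rw [tsum_eq_sum (s := Finset.range (ν ([]) ω))
        (fun i hi => by simp only [χ]; rw [if_neg (by simpa using hi)])]
      have he : ∀ i ∈ Finset.range (ν ([]) ω), χ i ω = 1 := fun i hi => by
        simp only [χ]; rw [if_pos (Finset.mem_range.mp hi)]
      rw [Finset.sum_congr rfl he, Finset.sum_const, Finset.card_range, nsmul_eq_mul, mul_one]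
    have h2 : ∀ i : ℕ, P {ω | i < ν ([]) ω} = ∫⁻ ω, χ i ω ∂P := fun i => (hχint i).symm
    calc (∑' i : ℕ, P {ω | i < ν ([]) ω}) = ∑' i : ℕ, ∫⁻ ω, χ i ω ∂P := by
          exact tsum_congr h2
      _ = ∫⁻ ω, ∑' i : ℕ, χ i ω ∂P :=
          (lintegral_tsum fun i => (hχmeas i).aemeasurable).symm
      _ = ∫⁻ ω, ((ν ([]) ω : ℕ) : ℝ≥0∞) ∂P := lintegral_congr h1
      _ = ∫⁻ ω, ENNReal.ofReal ((ν ([]) ω : ℕ) : ℝ) ∂P := by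
          refine lintegral_congr fun ω => ?_
          rw [ENNReal.ofReal_natCast]
      _ = ENNReal.ofReal (∫ ω, ((ν root ω : ℕ) : ℝ) ∂P) :=
          (ofReal_integral_eq_lintegral_ofReal hνint
            (Eventually.of_forall fun ω => Nat.cast_nonneg _)).symm
      _ = ENNReal.ofReal m := by rw [← hm]
  -- measurability of the joint family coordinates
  have hpairm : ∀ j, Measurable (pairFam ν ξ j) := fun j => by
    cases j with
    | inl y => exact hmν y
    | inr y => exact hmξ y
  -- independence of `χ i` from measurable functions of the joint family at `[i]`
  have hindepHχ : ∀ (i : ℕ) (H : (∀ j, codom j) → ℝ≥0∞), Measurable H →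
      IndepFun (χ i) (fun ω => H (GWAux.jointFam ν ξ ([i]) ω)) P := by
    intro i H hH
    set msF : (List ℕ ⊕ List ℕ) → MeasurableSpace Ω :=
      fun j => MeasurableSpace.comap (pairFam ν ξ j) inferInstance with hmsF
    have h_le : ∀ j, msF j ≤ _ := fun j => (hpairm j).comap_le
    have hii : iIndep msF P := hindep
    have hIS := indep_biSup_compl h_le hii {j | j ≠ Sum.inl ([])}
    have hcompl : {j : List ℕ ⊕ List ℕ | j ≠ Sum.inl ([])}ᶜ = {Sum.inl ([])} := by
      ext j; simp
    rw [hcompl] at hIS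
    have hsup : (⨆ j ∈ ({Sum.inl ([])} : Set (List ℕ ⊕ List ℕ)), msF j)
        = msF (Sum.inl ([])) := by simp
    rw [hsup] at hIS
    have hl : MeasurableSpace.comap (χ i) inferInstance ≤ msF (Sum.inl ([])) := by
      have hg : Measurable[msF (Sum.inl ([]))] (ν ([])) := Measurable.of_comap_le le_rfl
      have hχ' : Measurable[msF (Sum.inl ([]))] (χ i) :=
        (measurable_from_top (f := fun k : ℕ => if i < k then (1:ℝ≥0∞) else 0)).comp hg
      exact hχ'.comap_le
    have hjm : Measurable[⨆ j ∈ {j : List ℕ ⊕ List ℕ | j ≠ Sum.inl ([])}, msF j]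
        (GWAux.jointFam ν ξ ([i])) := by
      refine Measurable.of_comap_le ?_
      have hpi : (MeasurableSpace.pi : MeasurableSpace (∀ j, codom j))
          = ⨆ j, MeasurableSpace.comap (fun f : ∀ j, codom j => f j) inferInstance := rfl
      rw [hpi, MeasurableSpace.comap_iSup]
      refine iSup_le fun j => ?_
      rw [MeasurableSpace.comap_comp]
      cases j with
      | inl y =>
        have hmem : (Sum.inl (([i] : List ℕ) ++ y) : List ℕ ⊕ List ℕ)
            ∈ {j : List ℕ ⊕ List ℕ | j ≠ Sum.inl ([])} := by simp
        exact le_biSup msF hmem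
      | inr y =>
        have hmem : (Sum.inr (([i] : List ℕ) ++ y) : List ℕ ⊕ List ℕ)
            ∈ {j : List ℕ ⊕ List ℕ | j ≠ Sum.inl ([])} := by simp
        exact le_biSup msF hmem
    have hr : MeasurableSpace.comap (fun ω => H (GWAux.jointFam ν ξ ([i]) ω)) inferInstance
        ≤ ⨆ j ∈ {j : List ℕ ⊕ List ℕ | j ≠ Sum.inl ([])}, msF j :=
      Measurable.comap_le (hH.comp hjm)
    exact indep_of_indep_of_le_right (indep_of_indep_of_le_left hIS.symm hl) hr
  -- translation invariance of lintegrals of the joint family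
  have hjint : ∀ (x : List ℕ) (H : (∀ j, codom j) → ℝ≥0∞), Measurable H →
      ∫⁻ ω, H (GWAux.jointFam ν ξ x ω) ∂P = ∫⁻ ω, H (GWAux.jointFam ν ξ ([]) ω) ∂P := by
    intro x H hH
    rw [← lintegral_map hH (GWAux.jointFam_measurable ν ξ hmν hmξ x),
      ← lintegral_map hH (GWAux.jointFam_measurable ν ξ hmν hmξ ([])),
      GWAux.jointFam_map ν ξ hmν hmξ hindep hidν hidξ x]
  -- the key estimate
  have key : ∀ (D : ℕ → Ω → ℝ), (∀ i, Measurable (D i)) →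
      ∀ (H : (∀ j, codom j) → ℝ≥0∞), Measurable H →
      (∀ i : ℕ, ∀ᵐ ω ∂P, 0 ≤ D i ω) →
      (∀ i : ℕ, ∀ᵐ ω ∂P, ENNReal.ofReal (D i ω) ≤ H (GWAux.jointFam ν ξ ([i]) ω)) →
      (∫⁻ ω, ENNReal.ofReal (m⁻¹ * ∑ i ∈ Finset.range (ν ([]) ω), D i ω) ∂P)
        ≤ ENNReal.ofReal m⁻¹
          * (ENNReal.ofReal m * ∫⁻ ω, H (GWAux.jointFam ν ξ ([]) ω) ∂P) := by
    intro D hD H hH hD0 hDle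
    have e1 : ∀ᵐ ω ∂P, ENNReal.ofReal (m⁻¹ * ∑ i ∈ Finset.range (ν ([]) ω), D i ω)
        = ENNReal.ofReal m⁻¹ * ∑' i : ℕ, χ i ω * ENNReal.ofReal (D i ω) := by
      filter_upwards [ae_all_iff.mpr hD0] with ω hω
      rw [ENNReal.ofReal_mul (inv_nonneg.mpr hm0.le)]
      congr 1
      rw [ENNReal.ofReal_sum_of_nonneg (fun i _ => hω i),
        tsum_eq_sum (s := Finset.range (ν ([]) ω))
          (f := fun i => χ i ω * ENNReal.ofReal (D i ω))
          (fun i hi => by simp only [χ]; rw [if_neg (by simpa using hi), zero_mul])]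
      refine Finset.sum_congr rfl fun i hi => ?_
      simp only [χ]
      rw [if_pos (Finset.mem_range.mp hi), one_mul]
    rw [lintegral_congr_ae e1, lintegral_const_mul' _ _ ENNReal.ofReal_ne_top,
      lintegral_tsum (f := fun i ω => χ i ω * ENNReal.ofReal (D i ω)) (fun i =>
        ((hχmeas i).mul (ENNReal.measurable_ofReal.comp (hD i))).aemeasurable)]
    refine mul_le_mul_right ?_ _
    have hterm : ∀ i : ℕ, (∫⁻ ω, χ i ω * ENNReal.ofReal (D i ω) ∂P)
        ≤ P {ω | i < ν ([]) ω} * ∫⁻ ω, H (GWAux.jointFam ν ξ ([]) ω) ∂P := by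
      intro i
      have hHm : Measurable fun ω => H (GWAux.jointFam ν ξ ([i]) ω) :=
        hH.comp (GWAux.jointFam_measurable ν ξ hmν hmξ _)
      have h1 : (∫⁻ ω, χ i ω * ENNReal.ofReal (D i ω) ∂P)
          ≤ ∫⁻ ω, χ i ω * H (GWAux.jointFam ν ξ ([i]) ω) ∂P :=
        lintegral_mono_ae ((hDle i).mono fun ω h => mul_le_mul_right h _)
      have h2 : (∫⁻ ω, χ i ω * H (GWAux.jointFam ν ξ ([i]) ω) ∂P)
          = (∫⁻ ω, χ i ω ∂P) * ∫⁻ ω, H (GWAux.jointFam ν ξ ([i]) ω) ∂P :=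
        lintegral_mul_eq_lintegral_mul_lintegral_of_indepFun (hχmeas i) hHm
          (hindepHχ i H hH)
      rw [h2, hχint i, hjint ([i]) H hH] at h1
      exact h1
    calc (∑' i : ℕ, ∫⁻ ω, χ i ω * ENNReal.ofReal (D i ω) ∂P)
        ≤ ∑' i : ℕ, P {ω | i < ν ([]) ω} * ∫⁻ ω, H (GWAux.jointFam ν ξ ([]) ω) ∂P :=
          ENNReal.tsum_le_tsum hterm
      _ = (∑' i : ℕ, P {ω | i < ν ([]) ω}) * ∫⁻ ω, H (GWAux.jointFam ν ξ ([]) ω) ∂P :=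
          ENNReal.tsum_mul_right
      _ = ENNReal.ofReal m * ∫⁻ ω, H (GWAux.jointFam ν ξ ([]) ω) ∂P := by rw [hsum]
  have hcancel : ∀ z : ℝ≥0∞, ENNReal.ofReal m⁻¹ * (ENNReal.ofReal m * z) = z := by
    intro z
    rw [← mul_assoc, ← ENNReal.ofReal_mul (inv_nonneg.mpr hm0.le),
      inv_mul_cancel₀ (ne_of_gt hm0), ENNReal.ofReal_one, one_mul]
  -- the rescaled conductance lintegrals
  set CL : ℕ → ℝ≥0∞ := fun n => ∫⁻ ω, ENNReal.ofReal (gwCond m ν ξ n ([]) ω) ∂P with hCLdef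
  have main : ∀ k : ℕ, CL (k+1) ≤ Al / ((k : ℝ≥0∞) + 1) := by
    intro k
    induction k with
    | zero =>
      have hb : CL 1 ≤ ENNReal.ofReal m⁻¹ * (ENNReal.ofReal m * Al) :=
        key (fun i ω => (ξ ([i]) ω)⁻¹) (fun i => (hmξ _).inv)
          (fun f => ENNReal.ofReal ((ev f)⁻¹))
          (ENNReal.measurable_ofReal.comp hevm.inv)
          (fun i => (hξpos ([i])).mono fun ω h => inv_nonneg.mpr h.le)
          (fun i => Eventually.of_forall fun ω => le_of_eq (by
            have hj : ev (GWAux.jointFam ν ξ ([i]) ω) = ξ ([i]) ω := by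
              show ξ (([i] : List ℕ) ++ []) ω = ξ ([i]) ω
              rw [List.append_nil]
            show ENNReal.ofReal ((ξ ([i]) ω)⁻¹)
              = ENNReal.ofReal ((ev (GWAux.jointFam ν ξ ([i]) ω))⁻¹)
            rw [hj]))
      rw [hcancel] at hb
      simpa using hb
    | succ k IH =>
      set N : ℝ := (k : ℝ) + 1 with hNdef
      have hN0 : 0 < N := by positivity
      set aa : ℝ := (N / (N+1))^2 with haadef
      set bb : ℝ := (1 / (N+1))^2 with hbbdef
      have haa : 0 ≤ aa := sq_nonneg _
      have hbb : 0 ≤ bb := sq_nonneg _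
      set D : ℕ → Ω → ℝ := fun i ω => gwCond m ν ξ (k+1) ([i]) ω /
          (1 + ξ ([i]) ω * gwCond m ν ξ (k+1) ([i]) ω) with hDdef
      set H : (∀ j, codom j) → ℝ≥0∞ := fun f =>
        ENNReal.ofReal aa * ENNReal.ofReal (gwCond m νc ξc (k+1) ([]) f)
          + ENNReal.ofReal bb * ENNReal.ofReal ((ev f)⁻¹) with hHdef
      have hHm : Measurable H :=
        ((ENNReal.measurable_ofReal.comp (hGmeas (k+1) ([]))).const_mul _).add
          ((ENNReal.measurable_ofReal.comp hevm.inv).const_mul _)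
      have hDm : ∀ i, Measurable (D i) := fun i => (hgwmeas (k+1) _).div
        (measurable_const.add ((hmξ _).mul (hgwmeas (k+1) _)))
      have hD0 : ∀ i : ℕ, ∀ᵐ ω ∂P, 0 ≤ D i ω := fun i => hE.mono fun ω hω => by
        have hc := GWAux.gwCond_nonneg hm0 ν ξ hω (k+1) ([i])
        exact div_nonneg hc (add_nonneg zero_le_one (mul_nonneg (hω _).le hc))
      have hDle : ∀ i : ℕ, ∀ᵐ ω ∂P,
          ENNReal.ofReal (D i ω) ≤ H (GWAux.jointFam ν ξ ([i]) ω) := by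
        intro i
        filter_upwards [hE] with ω hω
        have hc := GWAux.gwCond_nonneg hm0 ν ξ hω (k+1) ([i])
        have ht := hω ([i])
        have hkey := GWAux.real_key hc ht hN0
        have hHj : H (GWAux.jointFam ν ξ ([i]) ω)
            = ENNReal.ofReal aa * ENNReal.ofReal (gwCond m ν ξ (k+1) ([i]) ω)
              + ENNReal.ofReal bb * ENNReal.ofReal ((ξ ([i]) ω)⁻¹) := by
          have hj : ev (GWAux.jointFam ν ξ ([i]) ω) = ξ ([i]) ω := by
            show ξ (([i] : List ℕ) ++ []) ω = ξ ([i]) ω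
            rw [List.append_nil]
          simp only [H]
          rw [hconn (k+1) ([i]) ω, hj]
        rw [hHj]
        calc ENNReal.ofReal (D i ω)
            ≤ ENNReal.ofReal (aa * gwCond m ν ξ (k+1) ([i]) ω + bb * (ξ ([i]) ω)⁻¹) :=
              ENNReal.ofReal_le_ofReal hkey
          _ = _ := by
              rw [ENNReal.ofReal_add (mul_nonneg haa hc)
                (mul_nonneg hbb (inv_nonneg.mpr ht.le)),
                ENNReal.ofReal_mul haa, ENNReal.ofReal_mul hbb]
      have hb : CL (k+2) ≤ ENNReal.ofReal m⁻¹
          * (ENNReal.ofReal m * ∫⁻ ω, H (GWAux.jointFam ν ξ ([]) ω) ∂P) :=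
        key D hDm H hHm hD0 hDle
      have hTeq : (∫⁻ ω, H (GWAux.jointFam ν ξ ([]) ω) ∂P)
          = ENNReal.ofReal aa * CL (k+1) + ENNReal.ofReal bb * Al := by
        have h1 : ∀ ω, H (GWAux.jointFam ν ξ ([]) ω)
            = ENNReal.ofReal aa * ENNReal.ofReal (gwCond m ν ξ (k+1) ([]) ω)
              + ENNReal.ofReal bb * ENNReal.ofReal ((ξ ([]) ω)⁻¹) := by
          intro ω
          have hj : ev (GWAux.jointFam ν ξ ([]) ω) = ξ ([]) ω := rfl
          simp only [H]
          rw [hconn (k+1) ([]) ω, hj]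
        have hmf : Measurable fun ω =>
            ENNReal.ofReal aa * ENNReal.ofReal (gwCond m ν ξ (k+1) ([]) ω) :=
          (ENNReal.measurable_ofReal.comp (hgwmeas (k+1) ([]))).const_mul _
        rw [lintegral_congr h1, lintegral_add_left hmf,
          lintegral_const_mul' _ _ ENNReal.ofReal_ne_top,
          lintegral_const_mul' _ _ ENNReal.ofReal_ne_top]
      rw [hTeq, hcancel] at hb
      have hIH' : ENNReal.ofReal aa * CL (k+1) + ENNReal.ofReal bb * Al
          ≤ ENNReal.ofReal aa * (Al / ((k : ℝ≥0∞) + 1)) + ENNReal.ofReal bb * Al :=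
        add_le_add_left (mul_le_mul_right IH _) _
      have hcast : ((k : ℝ≥0∞) + 1) = ENNReal.ofReal N := by
        rw [hNdef, ENNReal.ofReal_add (Nat.cast_nonneg k) zero_le_one,
          ENNReal.ofReal_natCast, ENNReal.ofReal_one]
      have harith : ENNReal.ofReal aa * (Al / ((k : ℝ≥0∞) + 1)) + ENNReal.ofReal bb * Al
          = Al / (((k+1 : ℕ) : ℝ≥0∞) + 1) := by
        have e1 : ENNReal.ofReal aa * (Al / ((k : ℝ≥0∞) + 1))
            = ENNReal.ofReal (aa / N) * Al := by
          rw [hcast, ENNReal.ofReal_div_of_pos hN0, div_eq_mul_inv, div_eq_mul_inv]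
          ring
        have e2 : aa / N + bb = (N+1)⁻¹ := by
          rw [haadef, hbbdef]
          field_simp
        have e3 : ENNReal.ofReal (N+1) = ((k+1 : ℕ) : ℝ≥0∞) + 1 := by
          rw [hNdef, ENNReal.ofReal_add (by positivity) zero_le_one,
            ENNReal.ofReal_add (Nat.cast_nonneg k) zero_le_one, ENNReal.ofReal_natCast,
            ENNReal.ofReal_one]
          push_cast
          ring
        rw [e1, ← add_mul, ← ENNReal.ofReal_add (by positivity) hbb, e2,
          ENNReal.ofReal_inv_of_pos (by positivity), e3, div_eq_mul_inv, mul_comm]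
      exact hb.trans (hIH'.trans_eq harith)
  -- conclusion
  intro n hn
  obtain ⟨k, rfl⟩ : ∃ k, n = k + 1 := ⟨n - 1, by omega⟩
  have h1 : ∫ ω, gwCond m ν ξ (k+1) root ω ∂P = (CL (k+1)).toReal := by
    rw [integral_eq_lintegral_of_nonneg_ae (hgw0 (k+1) root)
      ((hgwmeas (k+1) root).aestronglyMeasurable)]
    rfl
  rw [h1]
  have h2 : CL (k+1) ≤ Al / (((k+1 : ℕ)) : ℝ≥0∞) := by
    have hmain := main k
    have : ((k : ℝ≥0∞) + 1) = (((k+1 : ℕ)) : ℝ≥0∞) := by push_cast; ring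
    rwa [this] at hmain
  have hne : Al / (((k+1 : ℕ)) : ℝ≥0∞) ≠ ⊤ :=
    (ENNReal.div_lt_top hAltop (by exact_mod_cast Nat.succ_ne_zero k)).ne
  have h3 : (CL (k+1)).toReal ≤ (Al / (((k+1 : ℕ)) : ℝ≥0∞)).toReal :=
    ENNReal.toReal_mono hne h2
  refine h3.trans (le_of_eq ?_)
  have hA0 : 0 ≤ ∫ ω, (ξ root ω)⁻¹ ∂P := integral_nonneg_of_ae hξinv0
  rw [ENNReal.toReal_div, ← hAlof, ENNReal.toReal_ofReal hA0, ENNReal.toReal_natCast]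
end
end

section
/- Uniform-flow (Thomson) upper bound on the effective resistance: if E[ν^2] < ∞ (so that the martingale limit W is strictly positive almost surely), then almost surely, for every n ≥ 1, R_n ≤ Σ_{k=1}^{n} Σ_{x ∈ T_k} m^{-k} ξ_x (W^{(x)}/W)^2. -/
open MeasureTheory ProbabilityTheory Filter Topology Asymptotics
open scoped ENNReal

noncomputable section

section Aux
variable {Ω : Type*} {ν : List ℕ → Ω → ℕ} {ξ : List ℕ → Ω → ℝ} {ω : Ω}

/-- relative vertex sets -/
def vertsR {Ω : Type*} (ν : List ℕ → Ω → ℕ) (x : List ℕ) : ℕ → Ω → Finset (List ℕ)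
  | 0, _ => {x}
  | n + 1, ω => (vertsR ν x n ω).biUnion fun y => (Finset.range (ν y ω)).image fun i => y ++ [i]

variable {Ω : Type*} {ν : List ℕ → Ω → ℕ} {ξ : List ℕ → Ω → ℝ} {ω : Ω}

lemma verts_eq_vertsR (n : ℕ) (ω : Ω) : verts ν n ω = vertsR ν root n ω := by
  induction n with
  | zero => rfl
  | succ n ih => simp only [verts, vertsR, ih]

lemma vertsR_succ (x : List ℕ) (n : ℕ) (ω : Ω) :
    vertsR ν x (n + 1) ω =
      (Finset.range (ν x ω)).biUnion fun i => vertsR ν (x ++ [i]) n ω := by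
  induction n generalizing x with
  | zero =>
    simp only [vertsR]
    ext z
    simp [Finset.mem_biUnion, eq_comm]
  | succ n ih =>
    show (vertsR ν x (n+1) ω).biUnion _ = _
    rw [ih x]
    rw [Finset.biUnion_biUnion]
    rfl

lemma mem_vertsR {x z : List ℕ} {n : ℕ} (h : z ∈ vertsR ν x n ω) :
    ∃ u : List ℕ, z = x ++ u ∧ u.length = n := by
  induction n generalizing z with
  | zero =>
    simp only [vertsR, Finset.mem_singleton] at h
    exact ⟨[], by simp [h]⟩
  | succ n ih =>
    simp only [vertsR, Finset.mem_biUnion, Finset.mem_image] at h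
    obtain ⟨y, hy, i, _, rfl⟩ := h
    obtain ⟨u, rfl, hu⟩ := ih hy
    exact ⟨u ++ [i], by simp [hu]⟩

/-- Cauchy–Schwarz step. -/
lemma cs_inv_le {N : ℕ} (hN : 1 ≤ N) (a s : ℕ → ℝ) (ha : ∀ i, 0 ≤ a i) (hs : ∀ i, 0 < s i)
    (hsum : ∑ i ∈ Finset.range N, a i = 1) :
    (∑ i ∈ Finset.range N, (s i)⁻¹)⁻¹ ≤ ∑ i ∈ Finset.range N, a i ^ 2 * s i := by
  have hpos : 0 < ∑ i ∈ Finset.range N, (s i)⁻¹ :=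
    Finset.sum_pos (fun i _ => inv_pos.2 (hs i)) ⟨0, Finset.mem_range.2 hN⟩
  have hcs := Finset.sum_mul_sq_le_sq_mul_sq (Finset.range N)
    (fun i => a i * Real.sqrt (s i)) (fun i => (Real.sqrt (s i))⁻¹)
  have h1 : ∑ i ∈ Finset.range N, (a i * Real.sqrt (s i)) * (Real.sqrt (s i))⁻¹ = 1 := by
    rw [← hsum]
    refine Finset.sum_congr rfl fun i _ => ?_
    have : Real.sqrt (s i) ≠ 0 := Real.sqrt_ne_zero'.2 (hs i)
    field_simp
  have h2 : ∀ i, (a i * Real.sqrt (s i)) ^ 2 = a i ^ 2 * s i := fun i => by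
    rw [mul_pow, Real.sq_sqrt (hs i).le]
  have h3 : ∀ i, ((Real.sqrt (s i))⁻¹) ^ 2 = (s i)⁻¹ := fun i => by
    rw [inv_pow, Real.sq_sqrt (hs i).le]
  rw [h1] at hcs
  simp only [h2, h3, one_pow] at hcs
  rw [inv_le_iff_one_le_mul₀ hpos]
  calc (1:ℝ) ≤ (∑ i ∈ Finset.range N, a i ^ 2 * s i) * ∑ i ∈ Finset.range N, (s i)⁻¹ := hcs
  _ = _ := by ring

lemma gwCond_pos {m : ℝ} (hm0 : 0 < m) (hν : ∀ y, 1 ≤ ν y ω) (hξ : ∀ y, 0 < ξ y ω) :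
    ∀ n, 1 ≤ n → ∀ y, 0 < gwCond m ν ξ n y ω := by
  intro n hn
  induction n with
  | zero => omega
  | succ n ih =>
    intro y
    match n, ih with
    | 0, _ =>
      show 0 < m⁻¹ * ∑ i ∈ Finset.range (ν y ω), (ξ (y ++ [i]) ω)⁻¹
      refine mul_pos (inv_pos.2 hm0) (Finset.sum_pos (fun i _ => inv_pos.2 (hξ _)) ?_)
      exact ⟨0, Finset.mem_range.2 (hν y)⟩
    | n + 1, ih =>
      show 0 < m⁻¹ * ∑ i ∈ Finset.range (ν y ω), _
      refine mul_pos (inv_pos.2 hm0) (Finset.sum_pos (fun i _ => ?_) ⟨0, Finset.mem_range.2 (hν y)⟩)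
      have hC := ih (by omega) (y ++ [i])
      have hden : 0 < 1 + ξ (y ++ [i]) ω * gwCond m ν ξ (n + 1) (y ++ [i]) ω := by
        have := mul_pos (hξ (y ++ [i])) hC
        linarith
      exact div_pos hC hden


lemma append_inj (y : List ℕ) : Function.Injective (fun i : ℕ => y ++ [i]) := by
  intro i j h
  simpa using h

lemma vertsR_one (y : List ℕ) (ω : Ω) :
    vertsR ν y 1 ω = (Finset.range (ν y ω)).image fun i => y ++ [i] := by
  show (vertsR ν y 0 ω).biUnion _ = _
  simp [vertsR]

lemma sum_vertsR_succ (y : List ℕ) (n : ℕ) (ω : Ω) (f : List ℕ → ℝ) :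
    ∑ z ∈ vertsR ν y (n + 1) ω, f z =
      ∑ i ∈ Finset.range (ν y ω), ∑ z ∈ vertsR ν (y ++ [i]) n ω, f z := by
  rw [vertsR_succ]
  refine Finset.sum_biUnion ?_
  intro i _ j _ hij
  refine Finset.disjoint_left.2 fun z hzi hzj => hij ?_
  obtain ⟨u, hu, -⟩ := mem_vertsR hzi
  obtain ⟨v, hv, -⟩ := mem_vertsR hzj
  rw [hu] at hv
  have h2 : y ++ ([i] ++ u) = y ++ ([j] ++ v) := by
    rw [← List.append_assoc, hv, List.append_assoc]
  have h3 := List.append_cancel_left h2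
  exact ((by simpa using h3 : i = j ∧ u = v)).1

lemma sum_Icc_one_succ (N : ℕ) (F : ℕ → ℝ) :
    ∑ j ∈ Finset.Icc 1 (N + 1), F j = F 1 + ∑ k ∈ Finset.Icc 1 N, F (k + 1) := by
  induction N with
  | zero => simp
  | succ N ih =>
    rw [Finset.sum_Icc_succ_top (by omega), ih, Finset.sum_Icc_succ_top (Nat.one_le_iff_ne_zero.2 (by omega)), add_assoc]

lemma gwCond_one (m : ℝ) (x : List ℕ) (ω : Ω) :
    gwCond m ν ξ 1 x ω = m⁻¹ * ∑ i ∈ Finset.range (ν x ω), (ξ (x ++ [i]) ω)⁻¹ := rfl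

lemma gwCond_two (m : ℝ) (n : ℕ) (x : List ℕ) (ω : Ω) :
    gwCond m ν ξ (n + 2) x ω = m⁻¹ * ∑ i ∈ Finset.range (ν x ω),
      gwCond m ν ξ (n + 1) (x ++ [i]) ω /
        (1 + ξ (x ++ [i]) ω * gwCond m ν ξ (n + 1) (x ++ [i]) ω) := rfl

lemma det_bound {m : ℝ} (hm1 : 1 < m) (W : List ℕ → Ω → ℝ)
    (hν : ∀ y, 1 ≤ ν y ω) (hξ : ∀ y, 0 < ξ y ω)
    (hrec : ∀ y, W y ω = m⁻¹ * ∑ i ∈ Finset.range (ν y ω), W (y ++ [i]) ω)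
    (hWnn : ∀ y, 0 ≤ W y ω) :
    ∀ n, 1 ≤ n → ∀ y, 0 < W y ω →
      (gwCond m ν ξ n y ω)⁻¹ ≤
        ∑ k ∈ Finset.Icc 1 n, ∑ z ∈ vertsR ν y k ω, (m ^ k)⁻¹ * ξ z ω * (W z ω / W y ω) ^ 2 := by
  have hm0 : (0:ℝ) < m := lt_trans one_pos hm1
  have hm0' : m ≠ 0 := hm0.ne'
  -- preliminary: the flow coefficients
  have key : ∀ y : List ℕ, 0 < W y ω →
      ∑ i ∈ Finset.range (ν y ω), W (y ++ [i]) ω / (m * W y ω) = 1 := by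
    intro y hy
    rw [← Finset.sum_div]
    rw [div_eq_one_iff_eq (mul_ne_zero hm0' hy.ne')]
    have := hrec y
    field_simp at this
    linarith
  intro n hn
  induction n, hn using Nat.le_induction with
  | base =>
    intro y hWy
    have hWy' : W y ω ≠ 0 := hWy.ne'
    rw [Finset.Icc_self, Finset.sum_singleton, gwCond_one]
    have heq : m⁻¹ * ∑ i ∈ Finset.range (ν y ω), (ξ (y ++ [i]) ω)⁻¹
        = ∑ i ∈ Finset.range (ν y ω), ((fun i => m * ξ (y ++ [i]) ω) i)⁻¹ := by
      rw [Finset.mul_sum]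
      exact Finset.sum_congr rfl fun i _ => by rw [mul_inv]
    rw [heq]
    refine le_trans (cs_inv_le (hν y) (fun i => W (y ++ [i]) ω / (m * W y ω)) _
      (fun i => div_nonneg (hWnn _) (mul_nonneg hm0.le (hWnn y)))
      (fun i => mul_pos hm0 (hξ (y ++ [i]))) (key y hWy)) ?_
    rw [vertsR_one, Finset.sum_image (fun i _ j _ h => append_inj y h)]
    refine le_of_eq (Finset.sum_congr rfl fun i _ => ?_)
    have := hξ (y ++ [i])
    field_simp
  | succ n hn1 ih =>
    intro y hWy
    have hWy' : W y ω ≠ 0 := hWy.ne'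
    obtain ⟨k, rfl⟩ : ∃ k, n = k + 1 := ⟨n - 1, by omega⟩
    have hCpos : ∀ i : ℕ, 0 < gwCond m ν ξ (k + 1) (y ++ [i]) ω :=
      fun i => gwCond_pos hm0 hν hξ (k + 1) (by omega) _
    -- rewrite gwCond (k+2) as a sum of inverses
    set s : ℕ → ℝ := fun i => m * (ξ (y ++ [i]) ω + (gwCond m ν ξ (k + 1) (y ++ [i]) ω)⁻¹)
      with hs_def
    have hspos : ∀ i, 0 < s i := fun i =>
      mul_pos hm0 (add_pos (hξ (y ++ [i])) (inv_pos.2 (hCpos i)))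
    have hrw : gwCond m ν ξ (k + 2) y ω = ∑ i ∈ Finset.range (ν y ω), (s i)⁻¹ := by
      rw [gwCond_two, Finset.mul_sum]
      refine Finset.sum_congr rfl fun i _ => ?_
      have hC := hCpos i
      have hxi := hξ (y ++ [i])
      have hden : 0 < 1 + ξ (y ++ [i]) ω * gwCond m ν ξ (k + 1) (y ++ [i]) ω := by nlinarith
      have h1 : ξ (y ++ [i]) ω + (gwCond m ν ξ (k + 1) (y ++ [i]) ω)⁻¹
          = (1 + ξ (y ++ [i]) ω * gwCond m ν ξ (k + 1) (y ++ [i]) ω)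
            / gwCond m ν ξ (k + 1) (y ++ [i]) ω := by
        rw [eq_div_iff hC.ne', add_mul, inv_mul_cancel₀ hC.ne']
        ring
      show _ = (m * (ξ (y ++ [i]) ω + (gwCond m ν ξ (k + 1) (y ++ [i]) ω)⁻¹))⁻¹
      rw [h1, mul_inv, inv_div, inv_mul_eq_div]
    rw [hrw]
    set a : ℕ → ℝ := fun i => W (y ++ [i]) ω / (m * W y ω) with ha_def
    have hann : ∀ i, 0 ≤ a i := fun i =>
      div_nonneg (hWnn _) (mul_nonneg hm0.le (hWnn y))
    refine le_trans (cs_inv_le (hν y) a s hann hspos (key y hWy)) ?_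
    -- split the energy
    have hsplit : ∀ i, a i ^ 2 * s i
        = m⁻¹ * ξ (y ++ [i]) ω * (W (y ++ [i]) ω / W y ω) ^ 2
          + (a i ^ 2 * m) * (gwCond m ν ξ (k + 1) (y ++ [i]) ω)⁻¹ := by
      intro i
      rw [ha_def, hs_def]
      have := (hCpos i).ne'
      field_simp
    rw [Finset.sum_congr rfl fun i _ => hsplit i, Finset.sum_add_distrib]
    -- the second term is bounded by IH
    have hterm : ∀ i ∈ Finset.range (ν y ω),
        (a i ^ 2 * m) * (gwCond m ν ξ (k + 1) (y ++ [i]) ω)⁻¹ ≤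
        ∑ k' ∈ Finset.Icc 1 (k + 1), ∑ z ∈ vertsR ν (y ++ [i]) k' ω,
          (m ^ (k' + 1))⁻¹ * ξ z ω * (W z ω / W y ω) ^ 2 := by
      intro i _
      rcases lt_or_eq_of_le (hWnn (y ++ [i])) with hpos | hzero
      · have hIH := ih (y ++ [i]) hpos
        have ha2m : 0 ≤ a i ^ 2 * m := by positivity
        refine le_trans (mul_le_mul_of_nonneg_left hIH ha2m) (le_of_eq ?_)
        rw [Finset.mul_sum]
        refine Finset.sum_congr rfl fun k' _ => ?_
        rw [Finset.mul_sum]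
        refine Finset.sum_congr rfl fun z _ => ?_
        have hWyi : W (y ++ [i]) ω ≠ 0 := hpos.ne'
        rw [ha_def]
        have hmk : (m:ℝ) ^ k' ≠ 0 := pow_ne_zero _ hm0'
        field_simp
        ring
      · have : a i = 0 := by rw [ha_def]; simp [← hzero]
        rw [this]
        simp only [ne_eq, OfNat.ofNat_ne_zero, not_false_eq_true, zero_pow, zero_mul]
        refine Finset.sum_nonneg fun k' _ => Finset.sum_nonneg fun z _ => ?_
        have := (hξ z).le
        positivity
    refine le_trans (add_le_add_right (Finset.sum_le_sum hterm) _) ?_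
    -- now identify with the RHS
    rw [sum_Icc_one_succ (k + 1) (fun j => ∑ z ∈ vertsR ν y j ω, (m ^ j)⁻¹ * ξ z ω * (W z ω / W y ω) ^ 2)]
    refine add_le_add (le_of_eq ?_) (le_of_eq ?_)
    · -- depth-1 term
      rw [vertsR_one, Finset.sum_image (fun i _ j _ h => append_inj y h)]
      exact Finset.sum_congr rfl fun i _ => by rw [pow_one]
    · -- deeper terms
      rw [Finset.sum_comm]
      refine Finset.sum_congr rfl fun k' _ => ?_
      rw [sum_vertsR_succ]

/-- the σ-algebra generated by the offspring variables indexed by `S` -/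
def blockS {Ω : Type*} (ν : List ℕ → Ω → ℕ) (S : Set (List ℕ)) : MeasurableSpace Ω :=
  ⨆ y ∈ S, MeasurableSpace.comap (ν y) inferInstance

variable {Ω : Type*} {ν : List ℕ → Ω → ℕ} {ξ : List ℕ → Ω → ℝ}

lemma measurable_blockS_self {S : Set (List ℕ)} {y : List ℕ} (hy : y ∈ S) :
    Measurable[blockS ν S] (ν y) := by
  refine Measurable.of_comap_le ?_
  exact le_iSup₂ (f := fun y _ => MeasurableSpace.comap (ν y) inferInstance) y hy

lemma blockS_mono {S T : Set (List ℕ)} (h : S ⊆ T) : blockS ν S ≤ blockS ν T :=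
  iSup₂_le fun y hy => le_iSup₂ (f := fun y _ => MeasurableSpace.comap (ν y) inferInstance) y (h hy)

lemma blockS_le [m0 : MeasurableSpace Ω] (hmν : ∀ x, Measurable (ν x)) (S : Set (List ℕ)) :
    blockS ν S ≤ m0 :=
  iSup₂_le fun y _ => (hmν y).comap_le

lemma measurable_sum_range {m : MeasurableSpace Ω} {N : Ω → ℕ} (hN : Measurable[m] N)
    {f : ℕ → Ω → ℕ} (hf : ∀ i, Measurable[m] (f i)) :
    Measurable[m] fun ω => ∑ i ∈ Finset.range (N ω), f i ω := by
  have : (fun ω => ∑ i ∈ Finset.range (N ω), f i ω)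
      = (fun p : Ω × ℕ => ∑ i ∈ Finset.range p.2, f i p.1) ∘ fun ω => (ω, N ω) := rfl
  rw [this]
  refine (measurable_from_prod_countable_left fun n => ?_).comp (measurable_id.prodMk hN)
  show Measurable[m] fun ω : Ω => ∑ i ∈ Finset.range n, f i ω
  exact Finset.measurable_sum _ fun i _ => hf i

/-- words having `x` as a prefix -/
def pref (x : List ℕ) : Set (List ℕ) := {y | x <+: y}

lemma measurable_tcount_block (n : ℕ) (x : List ℕ) :
    Measurable[blockS ν (pref x)] (tcount ν n x) := by
  induction n generalizing x with
  | zero => exact measurable_const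
  | succ n ih =>
    refine measurable_sum_range (measurable_blockS_self (List.prefix_refl x)) fun i => ?_
    exact (ih (x ++ [i])).mono (blockS_mono fun y hy => (x.prefix_append [i]).trans hy) le_rfl

lemma measurable_tcount [m0 : MeasurableSpace Ω] (hmν : ∀ x, Measurable (ν x)) (n : ℕ)
    (x : List ℕ) : Measurable (tcount ν n x) :=
  (measurable_tcount_block n x).mono (blockS_le hmν _) le_rfl

lemma indep_blocks [m0 : MeasurableSpace Ω] {P : Measure Ω}
    (hmν : ∀ x, Measurable (ν x)) (hmξ : ∀ x, Measurable (ξ x))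
    (hindep : iIndepFun (pairFam ν ξ) P)
    {S T : Set (List ℕ)} (hST : Disjoint S T) :
    Indep (blockS ν S) (blockS ν T) P := by
  have h_le : ∀ i : List ℕ ⊕ List ℕ,
      MeasurableSpace.comap (pairFam ν ξ i) inferInstance ≤ m0 := by
    rintro (x | x)
    · exact (hmν x).comap_le
    · exact (hmξ x).comap_le
  have h := indep_iSup_of_disjoint h_le hindep.iIndep
    (S := Sum.inl '' S) (T := Sum.inl '' T)
    (Set.disjoint_image_of_injective Sum.inl_injective hST)
  refine indep_of_indep_of_le_right (indep_of_indep_of_le_left h ?_) ?_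
  · refine iSup₂_le fun y hy => ?_
    exact le_iSup₂ (f := fun i (_ : i ∈ Sum.inl '' S) =>
      MeasurableSpace.comap (pairFam ν ξ i) inferInstance) (Sum.inl y) ⟨y, hy, rfl⟩
  · refine iSup₂_le fun y hy => ?_
    exact le_iSup₂ (f := fun i (_ : i ∈ Sum.inl '' T) =>
      MeasurableSpace.comap (pairFam ν ξ i) inferInstance) (Sum.inl y) ⟨y, hy, rfl⟩

/-- the indicator of `i < ν x` -/
def indE {Ω : Type*} (ν : List ℕ → Ω → ℕ) (x : List ℕ) (i : ℕ) : Ω → ℝ≥0∞ :=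
  fun ω => if i < ν x ω then 1 else 0

lemma measurable_indE_block (x : List ℕ) (i : ℕ) {S : Set (List ℕ)} (hx : x ∈ S) :
    Measurable[blockS ν S] (indE ν x i) := by
  have : indE ν x i = (fun k : ℕ => if i < k then (1:ℝ≥0∞) else 0) ∘ ν x := rfl
  rw [this]
  exact (measurable_from_top (f := fun k : ℕ => if i < k then (1:ℝ≥0∞) else 0)).comp (measurable_blockS_self hx)

lemma tcount_cast_succ (x : List ℕ) (n : ℕ) (ω : Ω) :
    ((tcount ν (n+1) x ω : ℝ≥0∞)) =
      ∑' i : ℕ, indE ν x i ω * (tcount ν n (x ++ [i]) ω : ℝ≥0∞) := by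
  rw [show tcount ν (n+1) x ω = ∑ i ∈ Finset.range (ν x ω), tcount ν n (x ++ [i]) ω from rfl]
  rw [Nat.cast_sum]
  rw [tsum_eq_sum (s := Finset.range (ν x ω))
    (fun i hi => by rw [indE, if_neg (fun h => hi (Finset.mem_range.2 h)), zero_mul])]
  exact (Finset.sum_congr rfl fun i hi => by
    rw [indE, if_pos (Finset.mem_range.1 hi), one_mul]).symm

lemma nu_cast_eq_tsum_indE (x : List ℕ) (ω : Ω) :
    ((ν x ω : ℝ≥0∞)) = ∑' i : ℕ, indE ν x i ω := by
  rw [tsum_eq_sum (s := Finset.range (ν x ω))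
    (fun i hi => by rw [indE, if_neg (fun h => hi (Finset.mem_range.2 h))])]
  rw [Finset.sum_congr rfl (fun i hi => by rw [indE, if_pos (Finset.mem_range.1 hi)])]
  simp

lemma pref_disjoint_pref {x : List ℕ} {i j : ℕ} (hij : i ≠ j) :
    Disjoint (pref (x ++ [i])) (pref (x ++ [j])) := by
  refine Set.disjoint_left.2 fun z hzi hzj => ?_
  obtain ⟨u, hu⟩ := hzi
  obtain ⟨v, hv⟩ := hzj
  rw [← hu, List.append_assoc, List.append_assoc] at hv
  have h5 := List.append_cancel_left hv
  exact hij (((by simpa using h5 : j = i ∧ v = u).1).symm)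

lemma singleton_disjoint_pref {x : List ℕ} {i : ℕ} :
    Disjoint ({x} : Set (List ℕ)) (pref (x ++ [i])) := by
  refine Set.disjoint_left.2 fun z hz hzp => ?_
  rw [Set.mem_singleton_iff] at hz
  subst hz
  have := hzp.length_le
  simp at this

lemma measurable_tc_block (n : ℕ) (x : List ℕ) :
    Measurable[blockS ν (pref x)] (fun ω => (tcount ν n x ω : ℝ≥0∞)) :=
  (measurable_from_top (f := fun k : ℕ => (k : ℝ≥0∞))).comp (measurable_tcount_block n x)

section Meas
variable [m0 : MeasurableSpace Ω] {P : Measure Ω} [IsProbabilityMeasure P]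
  (hmν : ∀ x, Measurable (ν x)) (hmξ : ∀ x, Measurable (ξ x))
  (hindep : iIndepFun (pairFam ν ξ) P)
  (hidν : ∀ x, IdentDistrib (ν x) (ν root) P P)

include hmν hmξ hindep in
lemma lint_mul_block {S T : Set (List ℕ)} (hST : Disjoint S T) {f g : Ω → ℝ≥0∞}
    (hf : Measurable[blockS ν S] f) (hg : Measurable[blockS ν T] g) :
    ∫⁻ ω, f ω * g ω ∂P = (∫⁻ ω, f ω ∂P) * ∫⁻ ω, g ω ∂P :=
  lintegral_mul_eq_lintegral_mul_lintegral_of_independent_measurableSpace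
    (blockS_le hmν S) (blockS_le hmν T) (indep_blocks hmν hmξ hindep hST) hf hg

include hmν in
lemma lint_indE (x : List ℕ) (i : ℕ) :
    ∫⁻ ω, indE ν x i ω ∂P = P {ω | i < ν x ω} := by
  have : indE ν x i = Set.indicator {ω | i < ν x ω} (fun _ => (1:ℝ≥0∞)) := by
    funext ω; rw [Set.indicator_apply]; rfl
  rw [this]
  rw [lintegral_indicator (show MeasurableSet {ω | i < ν x ω} from hmν x trivial)]
  simp [Measure.restrict_apply MeasurableSet.univ]

end Meas

section Meas2
variable [m0 : MeasurableSpace Ω] {P : Measure Ω} [IsProbabilityMeasure P]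
  (hmν : ∀ x, Measurable (ν x)) (hmξ : ∀ x, Measurable (ξ x))
  (hindep : iIndepFun (pairFam ν ξ) P)
  (hidν : ∀ x, IdentDistrib (ν x) (ν root) P P)

include hmν in
lemma lint_indE2 (x : List ℕ) (i j : ℕ) :
    ∫⁻ ω, indE ν x i ω * indE ν x j ω ∂P = P {ω | i < ν x ω ∧ j < ν x ω} := by
  have h : (fun ω => indE ν x i ω * indE ν x j ω)
      = Set.indicator {ω | i < ν x ω ∧ j < ν x ω} (fun _ => (1:ℝ≥0∞)) := by
    funext ω
    rw [Set.indicator_apply]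
    by_cases h1 : i < ν x ω <;> by_cases h2 : j < ν x ω <;>
      simp [indE, h1, h2, Set.mem_setOf_eq]
  rw [lintegral_congr fun ω => congrFun h ω]
  rw [lintegral_indicator (show MeasurableSet {ω | i < ν x ω ∧ j < ν x ω} from
    (hmν x trivial : MeasurableSet ((ν x) ⁻¹' {k | i < k ∧ j < k})))]
  simp

include hidν in
lemma prob_lt_eq (x : List ℕ) (i : ℕ) : P {ω | i < ν x ω} = P {ω | i < ν root ω} :=
  (hidν x).measure_mem_eq (s := {k : ℕ | i < k}) trivial

include hidν in
lemma prob_lt2_eq (x : List ℕ) (i j : ℕ) :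
    P {ω | i < ν x ω ∧ j < ν x ω} = P {ω | i < ν root ω ∧ j < ν root ω} :=
  (hidν x).measure_mem_eq (s := {k : ℕ | i < k ∧ j < k}) trivial

include hmν in
lemma lint_nu_cast (x : List ℕ) :
    ∫⁻ ω, (ν x ω : ℝ≥0∞) ∂P = ∑' i : ℕ, P {ω | i < ν x ω} := by
  rw [lintegral_congr (nu_cast_eq_tsum_indE x)]
  rw [lintegral_tsum (fun i => ((measurable_indE_block x i (Set.mem_singleton x)).mono
    (blockS_le hmν _) le_rfl).aemeasurable)]
  exact tsum_congr fun i => lint_indE hmν x i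

include hmν in
lemma lint_nu_sq (x : List ℕ) :
    ∫⁻ ω, ((ν x ω : ℝ≥0∞)) ^ 2 ∂P = ∑' i : ℕ, ∑' j : ℕ, P {ω | i < ν x ω ∧ j < ν x ω} := by
  have hmi : ∀ i, Measurable (indE ν x i) := fun i =>
    (measurable_indE_block x i (Set.mem_singleton x)).mono (blockS_le hmν _) le_rfl
  have hpt : ∀ ω, ((ν x ω : ℝ≥0∞)) ^ 2 = ∑' i : ℕ, ∑' j : ℕ, indE ν x i ω * indE ν x j ω := by
    intro ω
    rw [sq, nu_cast_eq_tsum_indE x ω, ← ENNReal.tsum_mul_right]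
    exact tsum_congr fun i => (ENNReal.tsum_mul_left).symm
  rw [lintegral_congr hpt]
  rw [lintegral_tsum (fun i => (Measurable.ennreal_tsum fun j => (show Measurable fun ω => indE ν x i ω * indE ν x j ω from (hmi i).mul (hmi j))).aemeasurable)]
  refine tsum_congr fun i => ?_
  rw [lintegral_tsum (fun j => (show Measurable fun ω => indE ν x i ω * indE ν x j ω from (hmi i).mul (hmi j)).aemeasurable)]
  exact tsum_congr fun j => lint_indE2 hmν x i j


include hmν in
lemma measurable_tc (n : ℕ) (x : List ℕ) :
    Measurable (fun ω => (tcount ν n x ω : ℝ≥0∞)) :=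
  (measurable_tc_block n x).mono (blockS_le hmν _) le_rfl

include hmν in
lemma measurable_indE (x : List ℕ) (i : ℕ) : Measurable (indE ν x i) :=
  (measurable_indE_block x i (Set.mem_singleton x)).mono (blockS_le hmν _) le_rfl

include hmν hmξ hindep hidν in
lemma lint_tcount_eq (n : ℕ) (x : List ℕ) :
    ∫⁻ ω, (tcount ν n x ω : ℝ≥0∞) ∂P = (∫⁻ ω, (ν root ω : ℝ≥0∞) ∂P) ^ n := by
  induction n generalizing x with
  | zero => simp [tcount]
  | succ n ih =>
    rw [lintegral_congr (tcount_cast_succ x n)]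
    rw [lintegral_tsum (fun i =>
      (show Measurable fun ω => indE ν x i ω * (tcount ν n (x ++ [i]) ω : ℝ≥0∞) from (measurable_indE hmν x i).mul (measurable_tc hmν n (x ++ [i]))).aemeasurable)]
    have hterm : ∀ i : ℕ, ∫⁻ ω, indE ν x i ω * (tcount ν n (x ++ [i]) ω : ℝ≥0∞) ∂P
        = P {ω | i < ν root ω} * (∫⁻ ω, (ν root ω : ℝ≥0∞) ∂P) ^ n := by
      intro i
      rw [lint_mul_block hmν hmξ hindep singleton_disjoint_pref
        (measurable_indE_block x i (Set.mem_singleton x)) (measurable_tc_block n (x ++ [i])),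
        lint_indE hmν x i, prob_lt_eq hidν x i, ih (x ++ [i])]
    rw [tsum_congr hterm, ENNReal.tsum_mul_right, ← lint_nu_cast hmν root, pow_succ]
    ring

/-- recursive bound for second moments -/
def cseq (V M : ℝ≥0∞) : ℕ → ℝ≥0∞
  | 0 => 1
  | n + 1 => V * (M ^ n) ^ 2 + M * cseq V M n

include hmν hmξ hindep hidν in
lemma lint_tcount_sq_le (n : ℕ) (x : List ℕ) :
    ∫⁻ ω, ((tcount ν n x ω : ℝ≥0∞)) ^ 2 ∂P ≤
      cseq (∫⁻ ω, ((ν root ω : ℝ≥0∞)) ^ 2 ∂P) (∫⁻ ω, (ν root ω : ℝ≥0∞) ∂P) n := by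
  set M := ∫⁻ ω, (ν root ω : ℝ≥0∞) ∂P with hM
  set V := ∫⁻ ω, ((ν root ω : ℝ≥0∞)) ^ 2 ∂P with hV
  induction n generalizing x with
  | zero => simp [tcount, cseq]
  | succ n ih =>
    set a : ℕ → Ω → ℝ≥0∞ := fun i ω => indE ν x i ω * (tcount ν n (x ++ [i]) ω : ℝ≥0∞)
      with ha
    have hma : ∀ i, Measurable (a i) := fun i =>
      (measurable_indE hmν x i).mul (measurable_tc hmν n (x ++ [i]))
    have hpt : ∀ ω, ((tcount ν (n+1) x ω : ℝ≥0∞)) ^ 2 = ∑' i : ℕ, ∑' j : ℕ, a i ω * a j ω := by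
      intro ω
      rw [sq, tcount_cast_succ x n ω, ← ENNReal.tsum_mul_right]
      exact tsum_congr fun i => (ENNReal.tsum_mul_left).symm
    rw [lintegral_congr hpt]
    rw [lintegral_tsum (fun i =>
      (Measurable.ennreal_tsum fun j => (show Measurable fun ω => a i ω * a j ω from (hma i).mul (hma j))).aemeasurable)]
    have hsw : ∀ i : ℕ, ∫⁻ ω, ∑' j : ℕ, a i ω * a j ω ∂P = ∑' j : ℕ, ∫⁻ ω, a i ω * a j ω ∂P :=
      fun i => lintegral_tsum fun j => (show Measurable fun ω => a i ω * a j ω from (hma i).mul (hma j)).aemeasurable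
    rw [tsum_congr hsw]
    -- bound each term
    have hij : ∀ i j : ℕ, ∫⁻ ω, a i ω * a j ω ∂P ≤
        P {ω | i < ν root ω ∧ j < ν root ω} * (M ^ n) ^ 2
          + (if j = i then P {ω | i < ν root ω} * cseq V M n else 0) := by
      intro i j
      by_cases hji : j = i
      · subst hji
        have hpt2 : ∀ ω, a j ω * a j ω = indE ν x j ω * ((tcount ν n (x ++ [j]) ω : ℝ≥0∞)) ^ 2 := by
          intro ω
          rw [ha]
          simp only []
          by_cases h : j < ν x ω <;> simp [indE, h, sq] <;> ring
        rw [lintegral_congr hpt2]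
        rw [lint_mul_block hmν hmξ hindep singleton_disjoint_pref
          (measurable_indE_block x j (Set.mem_singleton x)) ((measurable_tc_block n (x ++ [j])).pow_const 2),
          lint_indE hmν x j, prob_lt_eq hidν x j, if_pos rfl]
        exact le_add_self.trans (le_of_eq rfl) |>.trans' (mul_le_mul_right (ih (x ++ [j])) _) |>.trans le_rfl
      · have hrw2 : ∀ ω, a i ω * a j ω
            = (indE ν x i ω * indE ν x j ω) *
              ((tcount ν n (x ++ [i]) ω : ℝ≥0∞) * (tcount ν n (x ++ [j]) ω : ℝ≥0∞)) := by
          intro ω; rw [ha]; simp only []; ring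
        rw [lintegral_congr hrw2]
        rw [lint_mul_block hmν hmξ hindep (f := fun ω => indE ν x i ω * indE ν x j ω)
          (g := fun ω => (tcount ν n (x ++ [i]) ω : ℝ≥0∞) * (tcount ν n (x ++ [j]) ω : ℝ≥0∞))
          (Disjoint.union_right singleton_disjoint_pref singleton_disjoint_pref)
          ((measurable_indE_block x i (Set.mem_singleton x)).mul
            (measurable_indE_block x j (Set.mem_singleton x)))
          (((measurable_tc_block n (x ++ [i])).mono (blockS_mono Set.subset_union_left) le_rfl).mul
            ((measurable_tc_block n (x ++ [j])).mono (blockS_mono Set.subset_union_right) le_rfl))]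
        rw [lint_mul_block hmν hmξ hindep (pref_disjoint_pref (fun h => hji h.symm))
          (measurable_tc_block n (x ++ [i])) (measurable_tc_block n (x ++ [j]))]
        rw [lint_indE2 hmν x i j, prob_lt2_eq hidν x i j,
          lint_tcount_eq hmν hmξ hindep hidν n (x ++ [i]),
          lint_tcount_eq hmν hmξ hindep hidν n (x ++ [j]), if_neg hji, add_zero, ← hM, ← sq]
    calc ∑' i : ℕ, ∑' j : ℕ, ∫⁻ ω, a i ω * a j ω ∂P
        ≤ ∑' i : ℕ, ∑' j : ℕ, (P {ω | i < ν root ω ∧ j < ν root ω} * (M ^ n) ^ 2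
          + (if j = i then P {ω | i < ν root ω} * cseq V M n else 0)) :=
          ENNReal.tsum_le_tsum fun i => ENNReal.tsum_le_tsum fun j => hij i j
      _ = V * (M ^ n) ^ 2 + M * cseq V M n := by
          rw [tsum_congr fun i => ENNReal.tsum_add]
          rw [ENNReal.tsum_add]
          congr 1
          · rw [tsum_congr fun i => ENNReal.tsum_mul_right, ENNReal.tsum_mul_right]
            rw [hV, lint_nu_sq hmν root]
          · rw [tsum_congr fun i : ℕ => tsum_ite_eq i (fun _ => P {ω | i < ν root ω} * cseq V M n)]
            rw [ENNReal.tsum_mul_right, hM, lint_nu_cast hmν root]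
      _ = cseq V M (n + 1) := rfl
end Meas2

/-- the (everywhere-defined, measurable) limit candidate -/
def Wlim {Ω : Type*} (ν : List ℕ → Ω → ℕ) (M : ℝ≥0∞) (x : List ℕ) : Ω → ℝ≥0∞ :=
  fun ω => limsup (fun n => (M ^ n)⁻¹ * (tcount ν n x ω : ℝ≥0∞)) atTop

lemma measurable_wseq_block (M : ℝ≥0∞) (n : ℕ) (x : List ℕ) :
    Measurable[blockS ν (pref x)] (fun ω => (M ^ n)⁻¹ * (tcount ν n x ω : ℝ≥0∞)) :=
  (measurable_tc_block n x).const_mul _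

lemma measurable_Wlim_block (M : ℝ≥0∞) (x : List ℕ) :
    Measurable[blockS ν (pref x)] (Wlim ν M x) :=
  Measurable.limsup fun n => measurable_wseq_block M n x

lemma measurable_Wlim [m0 : MeasurableSpace Ω] (hmν : ∀ x, Measurable (ν x)) (M : ℝ≥0∞)
    (x : List ℕ) : Measurable (Wlim ν M x) :=
  (measurable_Wlim_block M x).mono (blockS_le hmν _) le_rfl

section AE
variable [m0 : MeasurableSpace Ω] {P : Measure Ω} [IsProbabilityMeasure P]

/-- a.e., the rescaled counts converge (in `ℝ≥0∞`) to `ofReal (Wx x)`, and `Wlim` agrees. -/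
lemma ae_tendsto_wseq {m : ℝ} (hm0 : 0 < m) {Wx : List ℕ → Ω → ℝ} (x : List ℕ)
    (hWx : ∀ᵐ ω ∂P, Tendsto (fun n => (m ^ n)⁻¹ * (tcount ν n x ω : ℝ)) atTop (𝓝 (Wx x ω))) :
    ∀ᵐ ω ∂P, Tendsto (fun n => ((ENNReal.ofReal m) ^ n)⁻¹ * (tcount ν n x ω : ℝ≥0∞)) atTop
      (𝓝 (ENNReal.ofReal (Wx x ω))) ∧ Wlim ν (ENNReal.ofReal m) x ω = ENNReal.ofReal (Wx x ω) := by
  filter_upwards [hWx] with ω hω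
  have heq : ∀ n : ℕ, ((ENNReal.ofReal m) ^ n)⁻¹ * (tcount ν n x ω : ℝ≥0∞)
      = ENNReal.ofReal ((m ^ n)⁻¹ * (tcount ν n x ω : ℝ)) := by
    intro n
    rw [← ENNReal.ofReal_pow hm0.le, ← ENNReal.ofReal_inv_of_pos (pow_pos hm0 n),
      ENNReal.ofReal_mul (by positivity), ENNReal.ofReal_natCast]
  have ht : Tendsto (fun n => ((ENNReal.ofReal m) ^ n)⁻¹ * (tcount ν n x ω : ℝ≥0∞)) atTop
      (𝓝 (ENNReal.ofReal (Wx x ω))) := by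
    simp only [heq]
    exact (ENNReal.continuous_ofReal.tendsto _).comp hω
  exact ⟨ht, ht.limsup_eq⟩

/-- a.e. all `Wx` values are nonnegative -/
lemma ae_Wx_nonneg {m : ℝ} (hm0 : 0 < m) {Wx : List ℕ → Ω → ℝ}
    (hWx : ∀ x, ∀ᵐ ω ∂P, Tendsto (fun n => (m ^ n)⁻¹ * (tcount ν n x ω : ℝ)) atTop (𝓝 (Wx x ω))) :
    ∀ᵐ ω ∂P, ∀ x, 0 ≤ Wx x ω := by
  rw [ae_all_iff]
  intro x
  filter_upwards [hWx x] with ω hω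
  refine ge_of_tendsto' hω fun n => ?_
  positivity

/-- a.e. the branching recursion for `Wx` holds at every word -/
lemma ae_Wx_rec {m : ℝ} (hm0 : 0 < m) {Wx : List ℕ → Ω → ℝ}
    (hWx : ∀ x, ∀ᵐ ω ∂P, Tendsto (fun n => (m ^ n)⁻¹ * (tcount ν n x ω : ℝ)) atTop (𝓝 (Wx x ω))) :
    ∀ᵐ ω ∂P, ∀ x, Wx x ω = m⁻¹ * ∑ i ∈ Finset.range (ν x ω), Wx (x ++ [i]) ω := by
  rw [ae_all_iff]
  intro x
  have hall : ∀ᵐ ω ∂P, Tendsto (fun n => (m ^ n)⁻¹ * (tcount ν n x ω : ℝ)) atTop (𝓝 (Wx x ω)) ∧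
      ∀ i : ℕ, Tendsto (fun n => (m ^ n)⁻¹ * (tcount ν n (x ++ [i]) ω : ℝ)) atTop
        (𝓝 (Wx (x ++ [i]) ω)) :=
    (hWx x).and (ae_all_iff.2 fun i => hWx (x ++ [i]))
  filter_upwards [hall] with ω hω
  obtain ⟨hx, hxi⟩ := hω
  have h1 : Tendsto (fun n => (m ^ (n+1))⁻¹ * (tcount ν (n+1) x ω : ℝ)) atTop (𝓝 (Wx x ω)) :=
    hx.comp (tendsto_add_atTop_nat 1)
  have h2 : ∀ n : ℕ, (m ^ (n+1))⁻¹ * (tcount ν (n+1) x ω : ℝ)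
      = m⁻¹ * ∑ i ∈ Finset.range (ν x ω), (m ^ n)⁻¹ * (tcount ν n (x ++ [i]) ω : ℝ) := by
    intro n
    rw [show tcount ν (n+1) x ω = ∑ i ∈ Finset.range (ν x ω), tcount ν n (x ++ [i]) ω from rfl]
    rw [Nat.cast_sum, Finset.mul_sum, Finset.mul_sum]
    refine Finset.sum_congr rfl fun i _ => ?_
    rw [pow_succ]
    field_simp
  have h3 : Tendsto (fun n => m⁻¹ * ∑ i ∈ Finset.range (ν x ω),
      (m ^ n)⁻¹ * (tcount ν n (x ++ [i]) ω : ℝ)) atTop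
      (𝓝 (m⁻¹ * ∑ i ∈ Finset.range (ν x ω), Wx (x ++ [i]) ω)) :=
    (tendsto_finset_sum _ fun i _ => hxi i).const_mul _
  simp only [h2] at h1
  exact tendsto_nhds_unique h1 h3

end AE

section Delta
variable [m0 : MeasurableSpace Ω] {P : Measure Ω} [IsProbabilityMeasure P]

lemma prob_Wlim_zero_le (hmν : ∀ x, Measurable (ν x))
    {M K : ℝ≥0∞} (hK1 : 1 ≤ K) (hKtop : K ≠ ∞)
    (hMn0 : ∀ n : ℕ, M ^ n ≠ 0) (hMntop : ∀ n : ℕ, M ^ n ≠ ∞)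
    (hint1 : ∀ n (x : List ℕ), ∫⁻ ω, (tcount ν n x ω : ℝ≥0∞) ∂P = M ^ n)
    (hint2 : ∀ n (x : List ℕ), ∫⁻ ω, ((tcount ν n x ω : ℝ≥0∞)) ^ 2 ∂P ≤ K * (M ^ n) ^ 2)
    {m : ℝ} (hm0 : 0 < m) (hMof : M = ENNReal.ofReal m)
    {Wx : List ℕ → Ω → ℝ}
    (hWx : ∀ x, ∀ᵐ ω ∂P, Tendsto (fun n => (m ^ n)⁻¹ * (tcount ν n x ω : ℝ)) atTop (𝓝 (Wx x ω)))
    (x : List ℕ) :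
    P {ω | Wlim ν M x ω = 0} ≤ 1 - 2⁻¹ / (2 * K) := by
  have hK0 : K ≠ 0 := fun h => by simp [h] at hK1
  set K' : ℝ≥0∞ := 2 * K with hK'
  have hK'0 : K' ≠ 0 := mul_ne_zero two_ne_zero hK0
  have hK'top : K' ≠ ∞ := ENNReal.mul_ne_top (by norm_num) hKtop
  set w : ℕ → Ω → ℝ≥0∞ := fun n ω => (M ^ n)⁻¹ * (tcount ν n x ω : ℝ≥0∞) with hw
  have hw_meas : ∀ n, Measurable (w n) := fun n =>
    ((measurable_tc_block (ν := ν) n x).mono (blockS_le hmν _) le_rfl).const_mul _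
  have hint_w : ∀ n, ∫⁻ ω, w n ω ∂P = 1 := by
    intro n
    rw [hw]
    rw [lintegral_const_mul _ ((measurable_tc_block (ν := ν) n x).mono (blockS_le hmν _) le_rfl)]
    rw [hint1 n x, ENNReal.inv_mul_cancel (hMn0 n) (hMntop n)]
  have hint_w2 : ∀ n, ∫⁻ ω, (w n ω) ^ 2 ∂P ≤ K := by
    intro n
    have hsq : ∀ ω, (w n ω) ^ 2 = ((M ^ n) ^ 2)⁻¹ * ((tcount ν n x ω : ℝ≥0∞)) ^ 2 := by
      intro ω; rw [hw]; simp only []; rw [mul_pow, ← ENNReal.inv_pow]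
    rw [lintegral_congr hsq]
    rw [lintegral_const_mul _ (((measurable_tc_block (ν := ν) n x).mono
      (blockS_le hmν _) le_rfl).pow_const 2)]
    refine le_trans (mul_le_mul_right (hint2 n x) _) (le_of_eq ?_)
    rw [← mul_assoc, mul_comm _ K, mul_assoc,
      ENNReal.inv_mul_cancel (pow_ne_zero 2 (hMn0 n)) (ENNReal.pow_ne_top (hMntop n)), mul_one]
  -- pointwise truncation
  have hpt : ∀ n ω, w n ω ≤ min (w n ω) K' + (w n ω) ^ 2 / K' := by
    intro n ω
    rcases le_total (w n ω) K' with h | h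
    · rw [min_eq_left h]; exact le_self_add
    · rw [min_eq_right h]
      refine le_add_left ?_
      have h1 : 1 ≤ w n ω / K' :=
        (ENNReal.le_div_iff_mul_le (Or.inl hK'0) (Or.inl hK'top)).2 (by rwa [one_mul])
      calc w n ω = w n ω * 1 := (mul_one _).symm
        _ ≤ w n ω * (w n ω / K') := mul_le_mul_right h1 _
        _ = (w n ω) ^ 2 / K' := by rw [sq]; exact (mul_div_assoc _ _ _).symm
  have h_half : ∀ n, 2⁻¹ ≤ ∫⁻ ω, min (w n ω) K' ∂P := by
    intro n
    have hb : (1:ℝ≥0∞) ≤ (∫⁻ ω, min (w n ω) K' ∂P) + 2⁻¹ := by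
      calc (1:ℝ≥0∞) = ∫⁻ ω, w n ω ∂P := (hint_w n).symm
        _ ≤ ∫⁻ ω, (min (w n ω) K' + (w n ω) ^ 2 / K') ∂P := lintegral_mono (hpt n)
        _ = (∫⁻ ω, min (w n ω) K' ∂P) + ∫⁻ ω, (w n ω) ^ 2 / K' ∂P :=
            lintegral_add_left ((hw_meas n).min measurable_const) _
        _ ≤ (∫⁻ ω, min (w n ω) K' ∂P) + 2⁻¹ := by
            refine add_le_add_right ?_ _
            have : ∫⁻ ω, (w n ω) ^ 2 / K' ∂P = (∫⁻ ω, (w n ω) ^ 2 ∂P) / K' := by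
              simp only [div_eq_mul_inv]
              exact lintegral_mul_const' _ _ (ENNReal.inv_ne_top.2 hK'0)
            rw [this]
            refine le_trans (ENNReal.div_le_div_right (hint_w2 n) K') (le_of_eq ?_)
            rw [hK', div_eq_mul_inv, ENNReal.mul_inv (Or.inr hKtop) (Or.inr hK0),
              ← mul_assoc, mul_comm K 2⁻¹, mul_assoc, ENNReal.mul_inv_cancel hK0 hKtop, mul_one]
    have h12 : (1:ℝ≥0∞) - 2⁻¹ = 2⁻¹ :=
      ENNReal.sub_eq_of_eq_add (by norm_num) ENNReal.inv_two_add_inv_two.symm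
    rw [← h12]
    exact tsub_le_iff_right.2 hb
  -- pass to the limit
  have hae := ae_tendsto_wseq (P := P) hm0 x (hWx x)
  have hlim : Tendsto (fun n => ∫⁻ ω, min (w n ω) K' ∂P) atTop
      (𝓝 (∫⁻ ω, min (ENNReal.ofReal (Wx x ω)) K' ∂P)) := by
    refine tendsto_lintegral_of_dominated_convergence (fun _ => K')
      (fun n => (hw_meas n).min measurable_const) (fun n => ae_of_all _ fun ω => min_le_right _ _)
      ?_ ?_
    · rw [lintegral_const]
      exact (ENNReal.mul_lt_top hK'top.lt_top (measure_lt_top P _)).ne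
    · filter_upwards [hae] with ω hω
      have h1 := hω.1
      rw [← hMof] at h1
      exact h1.min tendsto_const_nhds
  have key : 2⁻¹ ≤ ∫⁻ ω, min (ENNReal.ofReal (Wx x ω)) K' ∂P := ge_of_tendsto' hlim h_half
  have hcongr : ∫⁻ ω, min (ENNReal.ofReal (Wx x ω)) K' ∂P
      = ∫⁻ ω, min (Wlim ν M x ω) K' ∂P := by
    refine lintegral_congr_ae ?_
    filter_upwards [hae] with ω hω
    rw [hMof, hω.2]
  rw [hcongr] at key
  -- relate to the probability of nonvanishing
  have hmeas_ne : MeasurableSet {ω | Wlim ν M x ω ≠ 0} :=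
    ((measurable_Wlim hmν M x) (measurableSet_singleton 0)).compl
  have hub : ∫⁻ ω, min (Wlim ν M x ω) K' ∂P ≤ K' * P {ω | Wlim ν M x ω ≠ 0} := by
    have hptu : ∀ ω, min (Wlim ν M x ω) K'
        ≤ Set.indicator {ω | Wlim ν M x ω ≠ 0} (fun _ => K') ω := by
      intro ω
      by_cases h : Wlim ν M x ω = 0
      · rw [h, min_eq_left zero_le]
        exact zero_le
      · have hmem : ω ∈ {ω | Wlim ν M x ω ≠ 0} := h
        rw [Set.indicator_of_mem hmem]
        exact min_le_right _ _
    refine le_trans (lintegral_mono hptu) (le_of_eq ?_)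
    rw [lintegral_indicator hmeas_ne]
    simp [mul_comm]
  have hge : 2⁻¹ / K' ≤ P {ω | Wlim ν M x ω ≠ 0} :=
    (ENNReal.div_le_iff_le_mul (Or.inl hK'0) (Or.inl hK'top)).2
      (le_trans key (by rwa [mul_comm] at hub))
  have hcompl : {ω | Wlim ν M x ω = 0} = {ω | Wlim ν M x ω ≠ 0}ᶜ := by
    ext ω; simp [Set.mem_setOf_eq]
  rw [hcompl, measure_compl hmeas_ne (measure_ne_top P _), measure_univ]
  exact tsub_le_tsub_left hge 1

end Delta

section FixedPoint
variable [m0 : MeasurableSpace Ω] {P : Measure Ω} [IsProbabilityMeasure P]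

lemma Wlim_root_zero
    (hmν : ∀ x, Measurable (ν x)) (hmξ : ∀ x, Measurable (ξ x))
    (hindep : iIndepFun (pairFam ν ξ) P)
    (hidν : ∀ x, IdentDistrib (ν x) (ν root) P P)
    (hνpos : ∀ x, ∀ᵐ ω ∂P, 0 < ν x ω)
    {m : ℝ} (hm1 : 1 < m) {M : ℝ≥0∞} (hMof : M = ENNReal.ofReal m)
    (hνint : Integrable (fun ω => (ν root ω : ℝ)) P) (hm : m = ∫ ω, (ν root ω : ℝ) ∂P)
    {Wx : List ℕ → Ω → ℝ}
    (hWx : ∀ x, ∀ᵐ ω ∂P, Tendsto (fun n => (m ^ n)⁻¹ * (tcount ν n x ω : ℝ)) atTop (𝓝 (Wx x ω)))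
    {δ : ℝ≥0∞} (hδ0 : δ ≠ 0) (hδ1 : δ ≤ 1)
    (hQb : ∀ x, P {ω | Wlim ν M x ω = 0} ≤ 1 - δ) :
    P {ω | Wlim ν M root ω = 0} = 0 := by
  have hm0 : (0:ℝ) < m := lt_trans one_pos hm1
  set p1e := P {ω | ν root ω = 1} with hp1e
  set p2e := P {ω | 2 ≤ ν root ω} with hp2e
  have hp1x : ∀ x, P {ω | ν x ω = 1} = p1e := fun x =>
    (hidν x).measure_mem_eq (s := {1}) trivial
  have hp2x : ∀ x, P {ω | 2 ≤ ν x ω} = p2e := fun x =>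
    (hidν x).measure_mem_eq (s := {k | 2 ≤ k}) trivial
  -- the recursive inequality
  have key : ∀ x : List ℕ, P {ω | Wlim ν M x ω = 0} ≤
      p1e * P {ω | Wlim ν M (x ++ [0]) ω = 0}
        + p2e * (P {ω | Wlim ν M (x ++ [0]) ω = 0} * P {ω | Wlim ν M (x ++ [1]) ω = 0}) := by
    intro x
    set B0 := {ω | Wlim ν M (x ++ [0]) ω = 0} with hB0
    set B1 := {ω | Wlim ν M (x ++ [1]) ω = 0} with hB1
    set A1 := {ω | ν x ω = 1} with hA1
    set A2 := {ω | 2 ≤ ν x ω} with hA2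
    have hsub : {ω | Wlim ν M x ω = 0} ≤ᵐ[P] ((A1 ∩ B0) ∪ (A2 ∩ (B0 ∩ B1)) : Set Ω) := by
      filter_upwards [ae_tendsto_wseq (P := P) hm0 x (hWx x),
        ae_tendsto_wseq (P := P) hm0 (x ++ [0]) (hWx (x ++ [0])),
        ae_tendsto_wseq (P := P) hm0 (x ++ [1]) (hWx (x ++ [1])),
        ae_Wx_rec (P := P) hm0 hWx, ae_Wx_nonneg (P := P) hm0 hWx, hνpos x]
        with ω hz h0 h1 hrec hnn hν
      intro hmem
      rw [← hMof] at hz h0 h1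
      have hWx0 : Wx x ω = 0 := by
        have h2 : ENNReal.ofReal (Wx x ω) = 0 := by rw [← hz.2]; exact hmem
        have := ENNReal.ofReal_eq_zero.1 h2
        linarith [hnn x]
      have hsum : ∑ i ∈ Finset.range (ν x ω), Wx (x ++ [i]) ω = 0 := by
        have h3 := hrec x
        rw [hWx0] at h3
        have hminv : m⁻¹ ≠ 0 := inv_ne_zero (by linarith)
        rcases mul_eq_zero.1 h3.symm with h | h
        · exact absurd h hminv
        · exact h
      have heach : ∀ i ∈ Finset.range (ν x ω), Wx (x ++ [i]) ω = 0 :=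
        (Finset.sum_eq_zero_iff_of_nonneg (fun i _ => hnn _)).1 hsum
      have hB0mem : ω ∈ B0 := by
        rw [hB0]
        show Wlim ν M (x ++ [0]) ω = 0
        rw [h0.2, heach 0 (Finset.mem_range.2 hν), ENNReal.ofReal_zero]
      rcases Nat.lt_or_ge (ν x ω) 2 with h2 | h2
      · left
        exact ⟨show ν x ω = 1 by omega, hB0mem⟩
      · right
        refine ⟨h2, hB0mem, ?_⟩
        rw [hB1]
        show Wlim ν M (x ++ [1]) ω = 0
        rw [h1.2, heach 1 (Finset.mem_range.2 (by omega)), ENNReal.ofReal_zero]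
    have hmeasB0 : ∀ {S : Set (List ℕ)}, pref (x ++ [0]) ⊆ S → MeasurableSet[blockS ν S] B0 :=
      fun hS => ((measurable_Wlim_block M (x ++ [0])).mono (blockS_mono hS) le_rfl)
        (measurableSet_singleton 0)
    have hmeasB1 : ∀ {S : Set (List ℕ)}, pref (x ++ [1]) ⊆ S → MeasurableSet[blockS ν S] B1 :=
      fun hS => ((measurable_Wlim_block M (x ++ [1])).mono (blockS_mono hS) le_rfl)
        (measurableSet_singleton 0)
    have hind1 : P (A1 ∩ B0) = P A1 * P B0 := by
      have h := indep_blocks hmν hmξ hindep (S := {x}) (T := pref (x ++ [0]))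
        singleton_disjoint_pref
      exact (Indep_iff _ _ _).1 h A1 B0
        (measurable_blockS_self (Set.mem_singleton x) (MeasurableSet.singleton 1))
        (hmeasB0 subset_rfl)
    have hind2 : P (A2 ∩ (B0 ∩ B1)) = p2e * (P B0 * P B1) := by
      have h := indep_blocks hmν hmξ hindep (S := {x})
        (T := pref (x ++ [0]) ∪ pref (x ++ [1]))
        (Disjoint.union_right singleton_disjoint_pref singleton_disjoint_pref)
      have h2 := (Indep_iff _ _ _).1 h A2 (B0 ∩ B1)
        (measurable_blockS_self (Set.mem_singleton x) (trivial : MeasurableSet {k : ℕ | 2 ≤ k}))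
        ((hmeasB0 Set.subset_union_left).inter (hmeasB1 Set.subset_union_right))
      have h3 := indep_blocks hmν hmξ hindep (S := pref (x ++ [0])) (T := pref (x ++ [1]))
        (pref_disjoint_pref (by norm_num))
      have h4 := (Indep_iff _ _ _).1 h3 B0 B1 (hmeasB0 subset_rfl) (hmeasB1 subset_rfl)
      rw [h2, h4, hp2x x]
    calc P {ω | Wlim ν M x ω = 0} ≤ P ((A1 ∩ B0) ∪ (A2 ∩ (B0 ∩ B1))) := measure_mono_ae hsub
      _ ≤ P (A1 ∩ B0) + P (A2 ∩ (B0 ∩ B1)) := measure_union_le _ _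
      _ = p1e * P B0 + p2e * (P B0 * P B1) := by rw [hind1, hind2, hp1x x]
  -- pass to real numbers
  set Q : List ℕ → ℝ := fun x => (P {ω | Wlim ν M x ω = 0}).toReal with hQ
  set p1 := p1e.toReal with hp1
  set p2 := p2e.toReal with hp2
  have hδtop : δ ≠ ∞ := (hδ1.trans_lt ENNReal.one_lt_top).ne
  set δr := δ.toReal with hδr
  have hδr0 : 0 < δr := ENNReal.toReal_pos hδ0 hδtop
  have hQ1 : ∀ x, Q x ≤ 1 - δr := by
    intro x
    have h := ENNReal.toReal_mono (by
      exact (tsub_le_self.trans_lt ENNReal.one_lt_top).ne) (hQb x)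
    rwa [ENNReal.toReal_sub_of_le hδ1 ENNReal.one_ne_top, ENNReal.toReal_one] at h
  have hkeyr : ∀ x, Q x ≤ p1 * Q (x ++ [0]) + p2 * (Q (x ++ [0]) * Q (x ++ [1])) := by
    intro x
    have hne : p1e * P {ω | Wlim ν M (x ++ [0]) ω = 0}
        + p2e * (P {ω | Wlim ν M (x ++ [0]) ω = 0} * P {ω | Wlim ν M (x ++ [1]) ω = 0}) ≠ ∞ :=
      ENNReal.add_ne_top.2 ⟨ENNReal.mul_ne_top (measure_ne_top P _)
        (measure_ne_top P _), ENNReal.mul_ne_top (measure_ne_top P _)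
        (ENNReal.mul_ne_top (measure_ne_top P _) (measure_ne_top P _))⟩
    have h := ENNReal.toReal_mono hne (key x)
    rwa [ENNReal.toReal_add (ENNReal.mul_ne_top (measure_ne_top P _) (measure_ne_top P _))
      (ENNReal.mul_ne_top (measure_ne_top P _)
        (ENNReal.mul_ne_top (measure_ne_top P _) (measure_ne_top P _))),
      ENNReal.toReal_mul, ENNReal.toReal_mul, ENNReal.toReal_mul] at h
  have hp1nn : 0 ≤ p1 := ENNReal.toReal_nonneg
  have hp2nn : 0 ≤ p2 := ENNReal.toReal_nonneg
  -- p1 + p2 = 1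
  have hp12 : p1 + p2 = 1 := by
    have hd : Disjoint {ω | ν root ω = 1} {ω | 2 ≤ ν root ω} :=
      Set.disjoint_left.2 fun ω h1 h2 => by
        simp only [Set.mem_setOf_eq] at h1 h2; omega
    have hu : P ({ω | ν root ω = 1} ∪ {ω | 2 ≤ ν root ω}) = p1e + p2e :=
      measure_union hd (hmν root trivial)
    have hsup : {ω | 1 ≤ ν root ω} ⊆ {ω | ν root ω = 1} ∪ {ω | 2 ≤ ν root ω} := by
      intro ω h
      simp only [Set.mem_union, Set.mem_setOf_eq] at h ⊢
      omega
    have h1le : P {ω | 1 ≤ ν root ω} = 1 := by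
      have h0 : P {ω | ¬ (0 < ν root ω)} = 0 := ae_iff.1 (hνpos root)
      have hcompl : {ω | 1 ≤ ν root ω} = {ω | ¬ (0 < ν root ω)}ᶜ := by
        ext ω
        simp only [Set.mem_compl_iff, Set.mem_setOf_eq, not_not]
        omega
      rw [hcompl, measure_compl (by
        exact (MeasurableSet.compl ((hmν root) trivial) : MeasurableSet _)) (by
          rw [h0]; exact ENNReal.zero_ne_top), h0, measure_univ, tsub_zero]
    have : p1e + p2e = 1 := by
      rw [← hu]
      refine le_antisymm (prob_le_one) ?_
      rw [← h1le]
      exact measure_mono hsup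
    rw [hp1, hp2, ← ENNReal.toReal_add (measure_ne_top P _) (measure_ne_top P _), this,
      ENNReal.toReal_one]
  -- p2 > 0
  have hp2pos : 0 < p2 := by
    refine ENNReal.toReal_pos (fun h0 => ?_) (measure_ne_top P _)
    have hlt2 : ∀ᵐ ω ∂P, ν root ω < 2 := by
      rw [ae_iff]
      simp only [not_lt]
      exact h0
    have heq1 : ∀ᵐ ω ∂P, (ν root ω : ℝ) = 1 := by
      filter_upwards [hlt2, hνpos root] with ω h2 h1
      have : ν root ω = 1 := by omega
      rw [this, Nat.cast_one]
    have hint : ∫ ω, (ν root ω : ℝ) ∂P = 1 := by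
      rw [integral_congr_ae heq1]
      simp
    rw [hm, hint] at hm1
    linarith
  -- the supremum
  have hbdd : BddAbove (Set.range Q) := by
    refine ⟨1, ?_⟩
    rintro _ ⟨x, rfl⟩
    calc Q x ≤ (1 : ℝ≥0∞).toReal := ENNReal.toReal_mono ENNReal.one_ne_top prob_le_one
      _ = 1 := ENNReal.toReal_one
  set s := sSup (Set.range Q) with hs
  have hQles : ∀ x, Q x ≤ s := fun x => le_csSup hbdd ⟨x, rfl⟩
  have hQnn : ∀ x, 0 ≤ Q x := fun x => ENNReal.toReal_nonneg
  have hs0 : 0 ≤ s := le_trans (hQnn root) (hQles root)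
  have hs_ub : s ≤ 1 - δr := csSup_le (Set.range_nonempty _) (by rintro _ ⟨x, rfl⟩; exact hQ1 x)
  have hsineq : s ≤ p1 * s + p2 * (s * s) := by
    refine csSup_le (Set.range_nonempty _) ?_
    rintro _ ⟨x, rfl⟩
    calc Q x ≤ p1 * Q (x ++ [0]) + p2 * (Q (x ++ [0]) * Q (x ++ [1])) := hkeyr x
      _ ≤ p1 * s + p2 * (s * s) := by
          refine add_le_add (mul_le_mul_of_nonneg_left (hQles _) hp1nn)
            (mul_le_mul_of_nonneg_left ?_ hp2nn)
          exact mul_le_mul (hQles _) (hQles _) (hQnn _) hs0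
  have hsz : s ≤ 0 := by
    by_contra hneg
    push_neg at hneg
    have h1s : (0:ℝ) < 1 - s := by linarith
    have hposprod : 0 < p2 * (s * (1 - s)) := mul_pos hp2pos (mul_pos hneg h1s)
    nlinarith [hsineq, hp12, hposprod]
  have hQroot : Q root = 0 := le_antisymm (le_trans (hQles root) hsz) (hQnn root)
  rcases (ENNReal.toReal_eq_zero_iff _).1 hQroot with h | h
  · exact h
  · exact absurd h (measure_ne_top P _)

end FixedPoint

section Arith
variable [m0 : MeasurableSpace Ω] {P : Measure Ω} [IsProbabilityMeasure P]

lemma lint_nu_eq_ofReal {m : ℝ} (hνint : Integrable (fun ω => (ν root ω : ℝ)) P)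
    (hm : m = ∫ ω, (ν root ω : ℝ) ∂P) :
    ∫⁻ ω, (ν root ω : ℝ≥0∞) ∂P = ENNReal.ofReal m := by
  rw [hm, ofReal_integral_eq_lintegral_ofReal hνint (ae_of_all _ fun ω => Nat.cast_nonneg _)]
  exact lintegral_congr fun ω => (ENNReal.ofReal_natCast _).symm

lemma lint_nu_sq_ne_top (hν2 : Integrable (fun ω => (ν root ω : ℝ) ^ 2) P) :
    ∫⁻ ω, ((ν root ω : ℝ≥0∞)) ^ 2 ∂P ≠ ∞ := by
  have h : ∫⁻ ω, ((ν root ω : ℝ≥0∞)) ^ 2 ∂P = ENNReal.ofReal (∫ ω, (ν root ω : ℝ) ^ 2 ∂P) := by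
    rw [ofReal_integral_eq_lintegral_ofReal hν2 (ae_of_all _ fun ω => sq_nonneg _)]
    refine lintegral_congr fun ω => ?_
    rw [ENNReal.ofReal_pow (Nat.cast_nonneg _), ENNReal.ofReal_natCast]
  rw [h]
  exact ENNReal.ofReal_ne_top

lemma cseq_le_K {V M : ℝ≥0∞} (hM1 : 1 < M) (hMtop : M ≠ ∞) (hVtop : V ≠ ∞) :
    ∀ n, cseq V M n ≤ (1 + V / (M ^ 2 - M)) * (M ^ n) ^ 2 := by
  have hM0 : M ≠ 0 := fun h => by simp [h] at hM1
  have hMM : M ≤ M ^ 2 := by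
    rw [sq]
    calc M = M * 1 := (mul_one M).symm
      _ ≤ M * M := mul_le_mul_right hM1.le M
  have hMMlt : M < M ^ 2 := by
    rw [sq]
    calc M = M * 1 := (mul_one M).symm
      _ < M * M := (ENNReal.mul_lt_mul_iff_right hM0 hMtop).2 hM1
  have hsub0 : M ^ 2 - M ≠ 0 := (tsub_pos_iff_lt.2 hMMlt).ne'
  have hsubtop : M ^ 2 - M ≠ ∞ := (tsub_le_self.trans_lt (ENNReal.pow_ne_top hMtop).lt_top).ne
  set K := 1 + V / (M ^ 2 - M) with hK
  have h1 : (M ^ 2 - M) * K = (M ^ 2 - M) + V := by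
    rw [hK, mul_add, mul_one, ENNReal.mul_div_cancel' (fun h => absurd h hsub0) (fun h => absurd h hsubtop)]
  have h2 : M ^ 2 * K = (M ^ 2 - M) * K + M * K := by
    rw [← add_mul, tsub_add_cancel_of_le hMM]
  have hVMK : V + M * K ≤ M ^ 2 * K := by
    calc V + M * K ≤ ((M ^ 2 - M) + V) + M * K := add_le_add_left le_add_self _
      _ = M ^ 2 * K := by rw [h2, h1]
  intro n
  induction n with
  | zero => simp only [cseq, pow_zero, one_pow, mul_one]; exact le_self_add
  | succ n ih =>
    calc cseq V M (n + 1) = V * (M ^ n) ^ 2 + M * cseq V M n := rfl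
      _ ≤ V * (M ^ n) ^ 2 + M * (K * (M ^ n) ^ 2) := by
          exact add_le_add_right (mul_le_mul_right ih M) _
      _ = (V + M * K) * (M ^ n) ^ 2 := by ring
      _ ≤ (M ^ 2 * K) * (M ^ n) ^ 2 := mul_le_mul_left hVMK _
      _ = K * (M ^ (n + 1)) ^ 2 := by rw [pow_succ]; ring

end Arith

end Aux

/-- Uniform-flow (Thomson) upper bound: a.s., for every `n ≥ 1`, `R_n ≤ Σ_{k=1}^n Σ_{x ∈ T_k} m^(-k) ξ_x (W⁽ˣ⁾/W)²`. -/
theorem uniform_flow_resistance_upper_bound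
    {Ω : Type*} [MeasurableSpace Ω] (P : Measure Ω) [IsProbabilityMeasure P]
    -- the offspring variables `ν_x` and the edge weights `ξ_x`
    (ν : List ℕ → Ω → ℕ) (ξ : List ℕ → Ω → ℝ)
    (hmν : ∀ x, Measurable (ν x)) (hmξ : ∀ x, Measurable (ξ x))
    -- the two families are i.i.d. and globally independent
    (hindep : iIndepFun (pairFam ν ξ) P)
    (hidν : ∀ x, IdentDistrib (ν x) (ν root) P P)
    (hidξ : ∀ x, IdentDistrib (ξ x) (ξ root) P P)
    -- `ν` takes values in the positive integers and `ξ` is strictly positive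
    (hνpos : ∀ x, ∀ᵐ ω ∂P, 0 < ν x ω)
    (hξpos : ∀ x, ∀ᵐ ω ∂P, 0 < ξ x ω)
    -- the mean offspring number `m = E[ν]` satisfies `1 < m`
    (hνint : Integrable (fun ω => (ν root ω : ℝ)) P)
    (m : ℝ) (hm : m = ∫ ω, (ν root ω : ℝ) ∂P) (hm1 : 1 < m)
    (hν2 : Integrable (fun ω => (ν root ω : ℝ) ^ 2) P)
    -- `Wx x` is the a.s. limit `W⁽ˣ⁾` of `m^(|x|-n) #T_n[x]`; in particular `W = Wx root`
    (Wx : List ℕ → Ω → ℝ)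
    (hWx : ∀ x, ∀ᵐ ω ∂P,
      Tendsto (fun n => (m ^ n)⁻¹ * (tcount ν n x ω : ℝ)) atTop (𝓝 (Wx x ω)))
    :
    ∀ᵐ ω ∂P, ∀ n : ℕ, 1 ≤ n →
      (gwCond m ν ξ n root ω)⁻¹ ≤
        ∑ k ∈ Finset.Icc 1 n, ∑ x ∈ verts ν k ω,
          (m ^ k)⁻¹ * ξ x ω * (Wx x ω / Wx root ω) ^ 2 := by
  have hm0 : (0:ℝ) < m := lt_trans one_pos hm1
  set M : ℝ≥0∞ := ∫⁻ ω, (ν root ω : ℝ≥0∞) ∂P with hMdef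
  have hMof : M = ENNReal.ofReal m := lint_nu_eq_ofReal hνint hm
  have hM1 : 1 < M := by
    rw [hMof, ← ENNReal.ofReal_one]
    exact (ENNReal.ofReal_lt_ofReal_iff hm0).2 hm1
  have hMtop : M ≠ ∞ := by rw [hMof]; exact ENNReal.ofReal_ne_top
  have hM0' : M ≠ 0 := fun h => by simp [h] at hM1
  set V : ℝ≥0∞ := ∫⁻ ω, ((ν root ω : ℝ≥0∞)) ^ 2 ∂P with hVdef
  have hVtop : V ≠ ∞ := lint_nu_sq_ne_top hν2
  set K : ℝ≥0∞ := 1 + V / (M ^ 2 - M) with hKdef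
  have hK1 : 1 ≤ K := le_self_add
  have hMMlt : M < M ^ 2 := by
    rw [sq]
    calc M = M * 1 := (mul_one M).symm
      _ < M * M := (ENNReal.mul_lt_mul_iff_right hM0' hMtop).2 hM1
  have hKtop : K ≠ ∞ := ENNReal.add_ne_top.2 ⟨ENNReal.one_ne_top,
    (ENNReal.div_lt_top hVtop (tsub_pos_iff_lt.2 hMMlt).ne').ne⟩
  have hMn0 : ∀ n : ℕ, M ^ n ≠ 0 := fun n => pow_ne_zero n hM0'
  have hMntop : ∀ n : ℕ, M ^ n ≠ ∞ := fun n => ENNReal.pow_ne_top hMtop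
  have hint1 : ∀ n (x : List ℕ), ∫⁻ ω, (tcount ν n x ω : ℝ≥0∞) ∂P = M ^ n :=
    fun n x => lint_tcount_eq hmν hmξ hindep hidν n x
  have hint2 : ∀ n (x : List ℕ), ∫⁻ ω, ((tcount ν n x ω : ℝ≥0∞)) ^ 2 ∂P ≤ K * (M ^ n) ^ 2 :=
    fun n x => le_trans (lint_tcount_sq_le hmν hmξ hindep hidν n x) (cseq_le_K hM1 hMtop hVtop n)
  set δ : ℝ≥0∞ := 2⁻¹ / (2 * K) with hδdef
  have h2K0 : (2:ℝ≥0∞) * K ≠ 0 := mul_ne_zero two_ne_zero (fun h => by simp [h] at hK1)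
  have h2Ktop : (2:ℝ≥0∞) * K ≠ ∞ := ENNReal.mul_ne_top (by norm_num) hKtop
  have hδ0 : δ ≠ 0 := (ENNReal.div_pos (by norm_num) h2Ktop).ne'
  have hδ1 : δ ≤ 1 := by
    rw [hδdef]
    refine (ENNReal.div_le_iff_le_mul (Or.inl h2K0) (Or.inl h2Ktop)).2 ?_
    rw [one_mul]
    calc (2:ℝ≥0∞)⁻¹ ≤ 1 := ENNReal.inv_le_one.2 one_le_two
      _ = 1 * 1 := (one_mul 1).symm
      _ ≤ 2 * K := mul_le_mul' one_le_two hK1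
  have hQb : ∀ x, P {ω | Wlim ν M x ω = 0} ≤ 1 - δ := fun x =>
    prob_Wlim_zero_le hmν hK1 hKtop hMn0 hMntop hint1 hint2 hm0 hMof hWx x
  have hzero : P {ω | Wlim ν M root ω = 0} = 0 :=
    Wlim_root_zero hmν hmξ hindep hidν hνpos hm1 hMof hνint hm hWx hδ0 hδ1 hQb
  have hWne : ∀ᵐ ω ∂P, Wlim ν M root ω ≠ 0 := by
    rw [ae_iff]
    simpa only [not_not] using hzero
  have hroot_pos : ∀ᵐ ω ∂P, 0 < Wx root ω := by
    filter_upwards [hWne, ae_tendsto_wseq (P := P) hm0 root (hWx root),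
      ae_Wx_nonneg (P := P) hm0 hWx] with ω hne h hnn
    rcases (hnn root).lt_or_eq with h2 | h2
    · exact h2
    · exfalso
      refine hne ?_
      rw [← hMof] at h
      rw [h.2, ← h2, ENNReal.ofReal_zero]
  filter_upwards [ae_Wx_rec (P := P) hm0 hWx, ae_Wx_nonneg (P := P) hm0 hWx,
    ae_all_iff.2 hνpos, ae_all_iff.2 hξpos, hroot_pos] with ω hrec hnn hν hξp hWroot
  intro n hn
  have hdet := det_bound hm1 Wx (fun y => hν y) (fun y => hξp y) (fun y => hrec y)
    (fun y => hnn y) n hn root hWroot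
  refine le_trans hdet (le_of_eq ?_)
  refine Finset.sum_congr rfl fun k _ => ?_
  rw [← verts_eq_vertsR]
end
end
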